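/- arXiv:1201.3795 — 2 statements merged into one kernel-verified Lean document; each statement's English description precedes it below -/
import Mathlib

section
/- Fix an integer k ≥ 1 and c > 0 with c/720 − log(4(c+2k)) > 5. Let n > c be an integer, p = c/n, and let H be an (n,k,p) Newman–Watts small world. Then P(there exists a connected set S ⊆ [n] with log n ≤ |S| ≤ 9n/10 and e(S,Sᶜ) ≤ c|S|/12) ≤ 1/n³. -/
open scoped Classical

noncomputable section

/-- The `(n,k)`-ring adjacency on `Fin n` (with mod-`n` arithmetic):
`x` and `y` are adjacent iff `(y-x) mod n ∈ {1,…,k}` (equivalently, in `{-k,…,-1}`). -/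
def ringAdj (n k : ℕ) (x y : Fin n) : Prop :=
  x ≠ y ∧ ((y - x).val ≤ k ∨ (x - y).val ≤ k)

/-- The Newman–Watts small world determined by the Bernoulli coordinates `η`:
the `(n,k)`-ring together with all pairs `{x,y}` with `η s(x,y) = true`. -/
def nwGraph (n k : ℕ) (η : Sym2 (Fin n) → Bool) : SimpleGraph (Fin n) where
  Adj x y := x ≠ y ∧ ((y - x).val ≤ k ∨ (x - y).val ≤ k ∨ η s(x, y) = true)
  symm := by
    constructor
    rintro x y ⟨hne, h⟩
    refine ⟨hne.symm, ?_⟩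
    rcases h with h | h | h
    · exact Or.inr (Or.inl h)
    · exact Or.inl h
    · exact Or.inr (Or.inr (by rwa [Sym2.eq_swap]))
  loopless := by constructor; rintro x ⟨hne, -⟩; exact hne rfl

/-- Product-Bernoulli(`p`) weight of an outcome `η`. -/
def nwWeight (n : ℕ) (p : ℝ) (η : Sym2 (Fin n) → Bool) : ℝ :=
  ∏ e : Sym2 (Fin n), if η e then p else 1 - p

/-- Probability of an event under the product Bernoulli(`p`) measure. -/
def nwPr (n : ℕ) (p : ℝ) (A : (Sym2 (Fin n) → Bool) → Prop) : ℝ :=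
  ∑ η : Sym2 (Fin n) → Bool, if A η then nwWeight n p η else 0

/-- Expectation under the product Bernoulli(`p`) measure. -/
def nwExp (n : ℕ) (p : ℝ) (X : (Sym2 (Fin n) → Bool) → ℝ) : ℝ :=
  ∑ η : Sym2 (Fin n) → Bool, nwWeight n p η * X η

variable {V : Type*} [Fintype V] [DecidableEq V]

/-- Degree of `v` in `G`. -/
def gdeg (G : SimpleGraph V) (v : V) : ℕ :=
  (Finset.univ.filter fun u => G.Adj v u).card

/-- Number of edges of `G`. -/
def edgeCount (G : SimpleGraph V) : ℕ := (∑ v, gdeg G v) / 2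

/-- `e(S,Sᶜ)`: number of edges with one endpoint in `S`, the other outside. -/
def eCross (G : SimpleGraph V) (S : Finset V) : ℕ :=
  ∑ x ∈ S, ∑ y ∈ Sᶜ, if G.Adj x y then 1 else 0

/-- `e(S) = Σ_{v∈S} deg v`. -/
def eTot (G : SimpleGraph V) (S : Finset V) : ℕ := ∑ x ∈ S, gdeg G x

/-- `e(S,S)`: number of edges with both endpoints in `S`. -/
def eIn (G : SimpleGraph V) (S : Finset V) : ℕ :=
  (∑ x ∈ S, ∑ y ∈ S, if G.Adj x y then 1 else 0) / 2

/-- `S` is connected if the induced subgraph `G[S]` is connected. -/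
def connectedSet (G : SimpleGraph V) (S : Finset V) : Prop :=
  (G.induce (S : Set V)).Connected

/-- One step of the lazy simple random walk applied to a distribution. -/
def lazyStep (G : SimpleGraph V) (μ : V → ℝ) : V → ℝ := fun v =>
  μ v / 2 + ∑ u ∈ Finset.univ.filter (fun u => G.Adj u v), μ u / (2 * gdeg G u)

/-- Distribution of the lazy simple random walk after `t` steps, started at `x`. -/
def walkDist (G : SimpleGraph V) (x : V) : ℕ → V → ℝ
  | 0 => fun v => if v = x then 1 else 0
  | (t + 1) => lazyStep G (walkDist G x t)

/-- Stationary distribution `π(v) = deg v / (2|E|)`. -/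
def statDist (G : SimpleGraph V) (v : V) : ℝ := gdeg G v / (2 * edgeCount G)

/-- Total variation distance. -/
def tvDist (μ ν : V → ℝ) : ℝ := (∑ v, |μ v - ν v|) / 2

/-- Mixing time `max_x min {t : ‖μ_{t,x} − π‖_TV ≤ 1/4}`. -/
def mixingTime (G : SimpleGraph V) : ℕ :=
  Finset.univ.sup fun x => sInf {t : ℕ | tvDist (walkDist G x t) (statDist G) ≤ 1 / 4}


lemma sum_pi_prod {ι κ : Type*} [Fintype ι] [DecidableEq ι] [Fintype κ] (F : ι → κ → ℝ) :
    ∑ f : ι → κ, ∏ i, F i (f i) = ∏ i, ∑ j, F i j := (Fintype.prod_sum (κ := fun _ => κ) F).symm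

lemma nwWeight_nonneg {n : ℕ} {p : ℝ} (hp0 : 0 ≤ p) (hp1 : p ≤ 1) (η : Sym2 (Fin n) → Bool) :
    0 ≤ nwWeight n p η := by
  refine Finset.prod_nonneg fun e _ => ?_
  by_cases h : η e <;> simp [h, hp0] <;> linarith

lemma key_fact (n : ℕ) (p : ℝ) (T F : Finset (Sym2 (Fin n))) (hd : Disjoint T F)
    (g : Sym2 (Fin n) → Bool → ℝ) :
    ∑ η : Sym2 (Fin n) → Bool,
      nwWeight n p η * ((∏ e ∈ T, (if η e = true then (1:ℝ) else 0)) * ∏ e ∈ F, g e (η e))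
      = p ^ T.card * ∏ e ∈ F, (p * g e true + (1 - p) * g e false) := by
  set Φ : Sym2 (Fin n) → Bool → ℝ := fun e b =>
    (if b then p else 1 - p) *
      ((if e ∈ T then (if b then (1:ℝ) else 0) else 1) * (if e ∈ F then g e b else 1)) with hΦ
  have h1 : ∀ η : Sym2 (Fin n) → Bool,
      nwWeight n p η * ((∏ e ∈ T, (if η e = true then (1:ℝ) else 0)) * ∏ e ∈ F, g e (η e))
      = ∏ e, Φ e (η e) := by
    intro η
    have e1 : (∏ e ∈ T, (if η e = true then (1:ℝ) else 0))
        = ∏ e, (if e ∈ T then (if η e then (1:ℝ) else 0) else 1) := by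
      rw [Finset.prod_ite_mem Finset.univ T fun e => if η e then (1:ℝ) else 0,
        Finset.univ_inter]
    have e2 : (∏ e ∈ F, g e (η e)) = ∏ e, (if e ∈ F then g e (η e) else 1) := by
      rw [Finset.prod_ite_mem Finset.univ F fun e => g e (η e), Finset.univ_inter]
    rw [e1, e2, nwWeight, ← Finset.prod_mul_distrib, ← Finset.prod_mul_distrib]
  simp only [h1]
  rw [sum_pi_prod]
  simp only [Fintype.sum_bool]
  have h2 : ∀ e, (Φ e true + Φ e false)
      = (if e ∈ T then p else 1) * (if e ∈ F then (p * g e true + (1 - p) * g e false) else 1) := by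
    intro e
    by_cases hT : e ∈ T
    · have hF : e ∉ F := fun hF => (Finset.disjoint_left.1 hd hT) hF
      simp [hΦ, hT, hF]
    · by_cases hF : e ∈ F <;> simp [hΦ, hT, hF] <;> ring
  simp only [h2]
  rw [Finset.prod_mul_distrib,
    Finset.prod_ite_mem Finset.univ T (fun _ => p), Finset.univ_inter,
    Finset.prod_ite_mem Finset.univ F (fun e => p * g e true + (1 - p) * g e false),
    Finset.univ_inter, Finset.prod_const]


def crossPairs (S : Finset V) : Finset (Sym2 V) :=
  (S ×ˢ Sᶜ).image fun z => s(z.1, z.2)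

lemma crossPairs_injOn (S : Finset V) :
    Set.InjOn (fun z : V × V => s(z.1, z.2)) ↑(S ×ˢ Sᶜ) := by
  rintro ⟨a, b⟩ hab ⟨a', b'⟩ hab' h
  simp only [Finset.coe_product, Set.mem_prod, Finset.mem_coe, Finset.mem_compl] at hab hab'
  rcases Sym2.eq_iff.1 h with ⟨rfl, rfl⟩ | ⟨rfl, rfl⟩
  · rfl
  · exact absurd hab.1 hab'.2

lemma card_crossPairs (S : Finset V) : (crossPairs S).card = S.card * Sᶜ.card := by
  rw [crossPairs, Finset.card_image_of_injOn (crossPairs_injOn S), Finset.card_product]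

lemma eCross_eq_sum (G : SimpleGraph V) (S : Finset V) :
    eCross G S = ∑ e ∈ crossPairs S, if e ∈ G.edgeSet then 1 else 0 := by
  rw [crossPairs, Finset.sum_image (fun a ha b hb h => crossPairs_injOn S ha hb h)]
  rw [eCross, ← Finset.sum_product']
  refine Finset.sum_congr rfl fun z hz => ?_
  have : s(z.1, z.2) ∈ G.edgeSet ↔ G.Adj z.1 z.2 := by
    cases z; exact SimpleGraph.mem_edgeSet G
  simp [this]

lemma crossPairs_mem (S : Finset V) {e : Sym2 V} (he : e ∈ crossPairs S) :
    ∃ x y, e = s(x, y) ∧ x ∈ S ∧ y ∉ S := by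
  rw [crossPairs, Finset.mem_image] at he
  obtain ⟨⟨x, y⟩, hz, rfl⟩ := he
  rw [Finset.mem_product, Finset.mem_compl] at hz
  exact ⟨x, y, rfl, hz.1, hz.2⟩

lemma percode (n k : ℕ) (p : ℝ) (hp0 : 0 ≤ p) (hp1 : p ≤ 1) (lam : ℝ) (hlam : 0 ≤ lam)
    (S : Finset (Fin n)) (T : Finset (Sym2 (Fin n))) (hT : ∀ e ∈ T, ∀ v ∈ e, v ∈ S)
    (τ : ℝ) :
    (∑ η : Sym2 (Fin n) → Bool,
      if ((∀ e ∈ T, η e = true) ∧ ((eCross (nwGraph n k η) S : ℝ) ≤ τ))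
        then nwWeight n p η else 0)
    ≤ p ^ T.card *
      (Real.exp (lam * τ) * (1 - p * (1 - Real.exp (-lam))) ^ (S.card * Sᶜ.card)) := by
  classical
  set CP := crossPairs S with hCP
  set R : Sym2 (Fin n) → Prop := fun e => e ∈ (nwGraph n k fun _ => false).edgeSet with hR
  set g : Sym2 (Fin n) → Bool → ℝ := fun e b =>
    if R e then Real.exp (-lam) else (if b then Real.exp (-lam) else 1) with hg
  have hgnn : ∀ e b, 0 ≤ g e b := by
    intro e b
    simp only [hg]
    split_ifs <;> positivity
  have hexp1 : Real.exp (-lam) ≤ 1 := Real.exp_le_one_iff.2 (by linarith)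
  -- for e ∈ CP, the edge indicator as a function of η e
  have hind : ∀ (η : Sym2 (Fin n) → Bool), ∀ e ∈ CP,
      g e (η e) = Real.exp (-lam * (if e ∈ (nwGraph n k η).edgeSet then (1:ℝ) else 0)) := by
    intro η e he
    obtain ⟨x, y, rfl, hx, hy⟩ := crossPairs_mem S he
    have hne : x ≠ y := fun h => hy (h ▸ hx)
    have hmem : s(x,y) ∈ (nwGraph n k η).edgeSet ↔ (R s(x,y) ∨ η s(x,y) = true) := by
      simp only [hR, SimpleGraph.mem_edgeSet, nwGraph, ne_eq]
      constructor
      · rintro ⟨h1, h2 | h2 | h2⟩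
        · exact Or.inl ⟨h1, Or.inl h2⟩
        · exact Or.inl ⟨h1, Or.inr (Or.inl h2)⟩
        · exact Or.inr h2
      · rintro (⟨h1, h2 | h2 | h2⟩ | h1)
        · exact ⟨hne, Or.inl h2⟩
        · exact ⟨hne, Or.inr (Or.inl h2)⟩
        · exact absurd h2 (by simp)
        · exact ⟨hne, Or.inr (Or.inr h1)⟩
    by_cases hr : R s(x,y)
    · have : s(x,y) ∈ (nwGraph n k η).edgeSet := hmem.2 (Or.inl hr)
      simp [hg, hr, this]
    · by_cases hη : η s(x,y) = true
      · have : s(x,y) ∈ (nwGraph n k η).edgeSet := hmem.2 (Or.inr hη)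
        simp [hg, hr, hη, this]
      · have : s(x,y) ∉ (nwGraph n k η).edgeSet := fun h => by
          rcases hmem.1 h with h' | h'
          · exact hr h'
          · exact hη h'
        simp [hg, hr, hη, this]
  have hdisj : Disjoint T CP := by
    rw [Finset.disjoint_left]
    intro e heT heCP
    obtain ⟨x, y, rfl, hx, hy⟩ := crossPairs_mem S heCP
    exact hy (hT _ heT y (Sym2.mem_mk_right x y))
  -- pointwise bound
  have hpt : ∀ η : Sym2 (Fin n) → Bool,
      (if ((∀ e ∈ T, η e = true) ∧ ((eCross (nwGraph n k η) S : ℝ) ≤ τ))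
        then nwWeight n p η else 0)
      ≤ Real.exp (lam * τ) *
        (nwWeight n p η * ((∏ e ∈ T, (if η e = true then (1:ℝ) else 0)) * ∏ e ∈ CP, g e (η e))) := by
    intro η
    have hw := nwWeight_nonneg hp0 hp1 η
    by_cases hev : ((∀ e ∈ T, η e = true) ∧ ((eCross (nwGraph n k η) S : ℝ) ≤ τ))
    · rw [if_pos hev]
      have h1 : (∏ e ∈ T, (if η e = true then (1:ℝ) else 0)) = 1 := by
        rw [Finset.prod_eq_one]
        intro e he; rw [if_pos (hev.1 e he)]
      have h2 : (∏ e ∈ CP, g e (η e)) = Real.exp (-lam * (eCross (nwGraph n k η) S : ℝ)) := by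
        have hsum : ((eCross (nwGraph n k η) S : ℝ))
            = ∑ e ∈ CP, (if e ∈ (nwGraph n k η).edgeSet then (1:ℝ) else 0) := by
          rw [hCP, eCross_eq_sum]
          push_cast
          refine Finset.sum_congr rfl fun e he => ?_
          split_ifs <;> norm_num
        rw [Finset.prod_congr rfl (hind η), ← Real.exp_sum, hsum, Finset.mul_sum]
      rw [h1, h2]
      have h3 : (1:ℝ) ≤ Real.exp (lam * τ) * Real.exp (-lam * (eCross (nwGraph n k η) S : ℝ)) := by
        rw [← Real.exp_add]
        refine Real.one_le_exp ?_
        have := hev.2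
        nlinarith [hev.2]
      calc nwWeight n p η = 1 * nwWeight n p η := by ring
        _ ≤ (Real.exp (lam * τ) * Real.exp (-lam * (eCross (nwGraph n k η) S : ℝ))) * nwWeight n p η := by
            exact mul_le_mul_of_nonneg_right h3 hw
        _ = Real.exp (lam * τ) * (nwWeight n p η * (1 * Real.exp (-lam * (eCross (nwGraph n k η) S : ℝ)))) := by ring
    · rw [if_neg hev]
      have : 0 ≤ (∏ e ∈ T, (if η e = true then (1:ℝ) else 0)) := by
        refine Finset.prod_nonneg fun e _ => ?_
        split_ifs <;> norm_num
      have h2 : 0 ≤ ∏ e ∈ CP, g e (η e) := Finset.prod_nonneg fun e _ => hgnn e (η e)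
      positivity
  calc (∑ η : Sym2 (Fin n) → Bool,
      if ((∀ e ∈ T, η e = true) ∧ ((eCross (nwGraph n k η) S : ℝ) ≤ τ))
        then nwWeight n p η else 0)
      ≤ ∑ η : Sym2 (Fin n) → Bool, Real.exp (lam * τ) *
        (nwWeight n p η * ((∏ e ∈ T, (if η e = true then (1:ℝ) else 0)) * ∏ e ∈ CP, g e (η e))) :=
        Finset.sum_le_sum fun η _ => hpt η
    _ = Real.exp (lam * τ) * (p ^ T.card * ∏ e ∈ CP, (p * g e true + (1 - p) * g e false)) := by
        rw [← Finset.mul_sum, key_fact n p T CP hdisj g]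
    _ ≤ Real.exp (lam * τ) * (p ^ T.card * (1 - p * (1 - Real.exp (-lam))) ^ CP.card) := by
        have hb : ∀ e ∈ CP, p * g e true + (1 - p) * g e false ≤ 1 - p * (1 - Real.exp (-lam)) := by
          intro e he
          have hgt : g e true = Real.exp (-lam) := by simp [hg]
          have hgf : g e false = if R e then Real.exp (-lam) else 1 := by simp [hg]
          rw [hgt, hgf]
          split_ifs with hr
          · nlinarith
          · linarith

        have hnn : ∀ e ∈ CP, 0 ≤ p * g e true + (1 - p) * g e false := by
          intro e he
          have := hgnn e true; have := hgnn e false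
          nlinarith
        have := Finset.prod_le_prod hnn hb
        rw [Finset.prod_const] at this
        have hpow : (0:ℝ) ≤ p ^ T.card := pow_nonneg hp0 _
        nlinarith [Real.exp_pos (lam * τ), mul_le_mul_of_nonneg_left this hpow]
    _ = p ^ T.card * (Real.exp (lam * τ) * (1 - p * (1 - Real.exp (-lam))) ^ (S.card * Sᶜ.card)) := by
        rw [← card_crossPairs S]; ring

abbrev NWTok (n k : ℕ) := (Fin k ⊕ Fin k) ⊕ Fin n
abbrev NWStep (n k : ℕ) := Option (NWTok n k)

variable {n k : ℕ} [NeZero n]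

open Fin.NatCast in
def tokApply (x : Fin n) : NWTok n k → Fin n
  | .inl (.inl j) => x + (((j : ℕ) + 1 : ℕ) : Fin n)
  | .inl (.inr j) => x - (((j : ℕ) + 1 : ℕ) : Fin n)
  | .inr v => v

def isRandStep : NWStep n k → Bool
  | some (.inr _) => true
  | _ => false

def curV (d : Fin n) (st : List (Fin n)) : Fin n := st.headD d

def stkRun (d : Fin n) : List (Fin n) → List (NWStep n k) → List (Fin n)
  | st, [] => st
  | st, none :: l => stkRun d st.tail l
  | st, some t :: l => stkRun d (tokApply (curV d st) t :: st) l

def pushRun (d : Fin n) : List (Fin n) → List (NWStep n k) → List (Fin n)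
  | _, [] => []
  | st, none :: l => pushRun d st.tail l
  | st, some t :: l => tokApply (curV d st) t :: pushRun d (tokApply (curV d st) t :: st) l

def rpRun (d : Fin n) : List (Fin n) → List (NWStep n k) → List (Sym2 (Fin n))
  | _, [] => []
  | st, none :: l => rpRun d st.tail l
  | st, some t :: l =>
    (if isRandStep (some t) then [s(curV d st, tokApply (curV d st) t)] else [])
      ++ rpRun d (tokApply (curV d st) t :: st) l

lemma stkRun_append (d : Fin n) (st : List (Fin n)) (a b : List (NWStep n k)) :
    stkRun d st (a ++ b) = stkRun d (stkRun d st a) b := by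
  induction a generalizing st with
  | nil => rfl
  | cons s l ih =>
    cases s with
    | none => simp [stkRun, ih]
    | some t => simp [stkRun, ih]

lemma pushRun_append (d : Fin n) (st : List (Fin n)) (a b : List (NWStep n k)) :
    pushRun d st (a ++ b) = pushRun d st a ++ pushRun d (stkRun d st a) b := by
  induction a generalizing st with
  | nil => rfl
  | cons s l ih =>
    cases s with
    | none => simp [pushRun, stkRun, ih]
    | some t => simp [pushRun, stkRun, ih]

lemma rpRun_append (d : Fin n) (st : List (Fin n)) (a b : List (NWStep n k)) :
    rpRun d st (a ++ b) = rpRun d st a ++ rpRun d (stkRun d st a) b := by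
  induction a generalizing st with
  | nil => rfl
  | cons s l ih =>
    cases s with
    | none => simp [rpRun, stkRun, ih]
    | some t => simp [rpRun, stkRun, ih]

lemma pushRun_length (d : Fin n) (st : List (Fin n)) (l : List (NWStep n k)) :
    (pushRun d st l).length = l.countP (fun s => s.isSome) := by
  induction l generalizing st with
  | nil => rfl
  | cons s l ih =>
    cases s with
    | none => simp [pushRun, List.countP_cons, ih]
    | some t => simp [pushRun, List.countP_cons, ih]

lemma rpRun_length (d : Fin n) (st : List (Fin n)) (l : List (NWStep n k)) :
    (rpRun d st l).length = l.countP (fun s => isRandStep s) := by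
  induction l generalizing st with
  | nil => rfl
  | cons s l ih =>
    cases s with
    | none => simp [rpRun, List.countP_cons, isRandStep, ih]
    | some t =>
      cases t with
      | inl t => simp [rpRun, List.countP_cons, isRandStep, ih]
      | inr v => simp [rpRun, List.countP_cons, isRandStep, ih]

lemma rpRun_mem (d : Fin n) (st : List (Fin n)) (l : List (NWStep n k)) :
    ∀ e ∈ rpRun d st l, ∀ v ∈ e, v = d ∨ v ∈ st ∨ v ∈ pushRun d st l := by
  induction l generalizing st with
  | nil => intro e he; simp [rpRun] at he
  | cons s l ih =>
    intro e he v hv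
    cases s with
    | none =>
      rcases ih st.tail e he v hv with h | h | h
      · exact Or.inl h
      · exact Or.inr (Or.inl (List.tail_subset st h))
      · exact Or.inr (Or.inr h)
    | some t =>
      rw [rpRun] at he
      rcases List.mem_append.1 he with he1 | he2
      · have he1' : e = s(curV d st, tokApply (curV d st) t) := by
          by_cases hr : isRandStep (some t : NWStep n k) <;> simp [hr] at he1
          exact he1
        subst he1'
        rcases Sym2.mem_iff.1 hv with rfl | rfl
        · rcases st with _ | ⟨x, st'⟩
          · exact Or.inl rfl
          · exact Or.inr (Or.inl (by simp [curV]))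
        · exact Or.inr (Or.inr (by simp [pushRun]))
      · rcases ih (tokApply (curV d st) t :: st) e he2 v hv with h | h | h
        · exact Or.inl h
        · rcases List.mem_cons.1 h with rfl | h'
          · exact Or.inr (Or.inr (by simp [pushRun]))
          · exact Or.inr (Or.inl h')
        · exact Or.inr (Or.inr (by simp [pushRun, h]))

lemma exposure (d : Fin n) (st : List (Fin n)) (l : List (NWStep n k)) :
    ∀ u ∈ pushRun d st l, ∃ a b, l = a ++ b ∧ curV d (stkRun d st a) = u := by
  induction l generalizing st with
  | nil => intro u hu; simp [pushRun] at hu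
  | cons s l ih =>
    intro u hu
    cases s with
    | none =>
      obtain ⟨a, b, hab, hcur⟩ := ih st.tail u hu
      exact ⟨none :: a, b, by rw [hab]; rfl, by simpa [stkRun] using hcur⟩
    | some t =>
      rw [pushRun] at hu
      rcases List.mem_cons.1 hu with rfl | hu'
      · exact ⟨[some t], l, rfl, by simp [stkRun, curV]⟩
      · obtain ⟨a, b, hab, hcur⟩ := ih (tokApply (curV d st) t :: st) u hu'
        exact ⟨some t :: a, b, by rw [hab]; rfl, by simpa [stkRun] using hcur⟩

open Fin.NatCast in
lemma exists_tok {n k : ℕ} [NeZero n] (η : Sym2 (Fin n) → Bool) (x y : Fin n)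
    (h : (nwGraph n k η).Adj x y) :
    ∃ t : NWTok n k, tokApply x t = y ∧ (isRandStep (some t) = true → η s(x, y) = true) := by
  obtain ⟨hne, hcase⟩ : x ≠ y ∧ ((y - x).val ≤ k ∨ (x - y).val ≤ k ∨ η s(x, y) = true) := h
  have hsub : y - x ≠ 0 := by
    rw [sub_ne_zero]; exact fun h => hne h.symm
  have hsub2 : x - y ≠ 0 := by
    rw [sub_ne_zero]; exact hne
  rcases hcase with h1 | h2 | h3
  · have hpos : 1 ≤ (y - x).val := by
      rcases Nat.eq_zero_or_pos (y - x).val with h0 | h0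
      · exact absurd (Fin.val_injective (by simp [h0])) hsub
      · omega
    refine ⟨.inl (.inl ⟨(y - x).val - 1, by omega⟩), ?_, by simp [isRandStep]⟩
    show x + ((((y - x).val - 1) + 1 : ℕ) : Fin n) = y
    have he : (((y - x).val - 1) + 1 : ℕ) = (y - x).val := by omega
    rw [he, Fin.cast_val_eq_self, add_comm, sub_add_cancel]
  · have hpos : 1 ≤ (x - y).val := by
      rcases Nat.eq_zero_or_pos (x - y).val with h0 | h0
      · exact absurd (Fin.val_injective (by simp [h0])) hsub2
      · omega
    refine ⟨.inl (.inr ⟨(x - y).val - 1, by omega⟩), ?_, by simp [isRandStep]⟩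
    show x - ((((x - y).val - 1) + 1 : ℕ) : Fin n) = y
    have he : (((x - y).val - 1) + 1 : ℕ) = (x - y).val := by omega
    rw [he, Fin.cast_val_eq_self, sub_sub_cancel]
  · exact ⟨.inr y, rfl, fun _ => h3⟩

lemma conn_to_walks {n : ℕ} (G : SimpleGraph (Fin n)) (S : Finset (Fin n))
    (h : (G.induce (S : Set (Fin n))).Connected) (v₀ : Fin n) (hv₀ : v₀ ∈ S) :
    ∀ x ∈ S, ∃ w : G.Walk v₀ x, ∀ z ∈ w.support, z ∈ S := by
  intro x hx
  obtain ⟨w'⟩ := h.preconnected ⟨v₀, by simpa using hv₀⟩ ⟨x, by simpa using hx⟩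
  refine ⟨w'.map (SimpleGraph.Embedding.induce (S : Set (Fin n))).toHom, ?_⟩
  intro z hz
  have hz2 : z ∈ w'.support.map (SimpleGraph.Embedding.induce (G := G) (S : Set (Fin n))).toHom := by
    rw [← SimpleGraph.Walk.support_map]; exact hz
  rw [List.mem_map] at hz2
  obtain ⟨⟨z', hz'⟩, _, rfl⟩ := hz2
  simpa using hz'

lemma build_main {n k : ℕ} [NeZero n] (η : Sym2 (Fin n) → Bool) :
    ∀ s : ℕ, ∀ S : Finset (Fin n), S.card = s → ∀ v₀ ∈ S,
    (∀ x ∈ S, ∃ w : (nwGraph n k η).Walk v₀ x, ∀ z ∈ w.support, z ∈ S) →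
    ∃ l : List (NWStep n k), l.length = 2 * (s - 1) ∧
      (v₀ :: pushRun v₀ [v₀] l).Nodup ∧
      (v₀ :: pushRun v₀ [v₀] l).toFinset = S ∧
      (rpRun v₀ [v₀] l).Nodup ∧
      ∀ e ∈ rpRun v₀ [v₀] l, η e = true := by
  intro s
  induction s using Nat.strong_induction_on with
  | _ s ih =>
  intro S hcard v₀ hv₀ hconn
  set G := nwGraph n k η with hG
  rcases Nat.lt_or_ge s 2 with hs | hs
  · -- s = 1
    have hpos : 1 ≤ s := hcard ▸ Finset.card_pos.2 ⟨v₀, hv₀⟩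
    have h1 : s = 1 := by omega
    have hS : S = {v₀} := by
      obtain ⟨a, ha⟩ := Finset.card_eq_one.1 (hcard.trans h1)
      rw [ha] at hv₀ ⊢
      rw [Finset.mem_singleton.1 hv₀]
    refine ⟨[], by simp [h1], by simp [pushRun], ?_, by simp [rpRun], by simp [rpRun]⟩
    simp [pushRun, hS]
  · -- main case
    set D : Fin n → ℕ := fun x =>
      sInf {m | ∃ w : G.Walk v₀ x, w.length = m ∧ ∀ z ∈ w.support, z ∈ S} with hD
    have hDmem : ∀ x ∈ S, ∃ w : G.Walk v₀ x, w.length = D x ∧ ∀ z ∈ w.support, z ∈ S := by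
      intro x hx
      obtain ⟨w, hw⟩ := hconn x hx
      have hne : {m | ∃ w : G.Walk v₀ x, w.length = m ∧ ∀ z ∈ w.support, z ∈ S}.Nonempty :=
        ⟨w.length, w, rfl, hw⟩
      obtain ⟨w', hw'⟩ := Nat.sInf_mem hne
      exact ⟨w', hw'⟩
    have hDle : ∀ x (w : G.Walk v₀ x), (∀ z ∈ w.support, z ∈ S) → D x ≤ w.length :=
      fun x w hw => Nat.sInf_le ⟨w, rfl, hw⟩
    obtain ⟨u, huS, humax⟩ := Finset.exists_max_image S D ⟨v₀, hv₀⟩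
    obtain ⟨x₁, hx₁S, hx₁⟩ := Finset.exists_mem_ne (by rw [hcard]; omega) v₀
    have hDx₁ : 1 ≤ D x₁ := by
      obtain ⟨w, hwlen, _⟩ := hDmem x₁ hx₁S
      rcases Nat.eq_zero_or_pos (D x₁) with h0 | h0
      · exact absurd (SimpleGraph.Walk.eq_of_length_eq_zero (hwlen.trans h0)) (Ne.symm hx₁)
      · exact h0
    have hDu : 1 ≤ D u := le_trans hDx₁ (humax x₁ hx₁S)
    have huv₀ : u ≠ v₀ := by
      rintro rfl
      have h0 : D u ≤ 0 := hDle u SimpleGraph.Walk.nil (by simp; exact hv₀)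
      omega
    obtain ⟨wu, hwulen, hwuS⟩ := hDmem u huS
    have hwunil : ¬ wu.reverse.Nil := by
      rw [SimpleGraph.Walk.not_nil_iff_lt_length, SimpleGraph.Walk.length_reverse]
      omega
    obtain ⟨w, hadj, q', hq'⟩ := SimpleGraph.Walk.not_nil_iff.1 hwunil
    have hwS : w ∈ S := by
      have hmem : w ∈ wu.reverse.support := by
        rw [hq', SimpleGraph.Walk.support_cons]
        exact List.mem_cons_of_mem _ q'.start_mem_support
      rw [SimpleGraph.Walk.support_reverse, List.mem_reverse] at hmem
      exact hwuS w hmem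
    have hwu_ne : w ≠ u := hadj.ne'
    set S' := S.erase u with hS'
    have hS'card : S'.card = s - 1 := by rw [hS', Finset.card_erase_of_mem huS, hcard]
    have hv₀' : v₀ ∈ S' := Finset.mem_erase.2 ⟨Ne.symm huv₀, hv₀⟩
    have hconn' : ∀ x ∈ S', ∃ w : G.Walk v₀ x, ∀ z ∈ w.support, z ∈ S' := by
      intro x hx
      have hxS : x ∈ S := Finset.mem_of_mem_erase hx
      have hxu : x ≠ u := Finset.ne_of_mem_erase hx
      obtain ⟨wx, hwxlen, hwxS⟩ := hDmem x hxS
      have hu_not : u ∉ wx.support := by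
        intro hu_in
        have h1 : D u ≤ (wx.takeUntil u hu_in).length :=
          hDle u _ (fun z hz => hwxS z (wx.support_takeUntil_subset hu_in hz))
        have h2 : (wx.takeUntil u hu_in).length ≤ wx.length :=
          SimpleGraph.Walk.length_takeUntil_le wx hu_in
        have h3 : (wx.takeUntil u hu_in).length ≠ wx.length := by
          intro heq
          have hspec := wx.take_spec hu_in
          have hlen := congrArg SimpleGraph.Walk.length hspec
          rw [SimpleGraph.Walk.length_append] at hlen
          have hz : (wx.dropUntil u hu_in).length = 0 := by omega
          exact hxu (SimpleGraph.Walk.eq_of_length_eq_zero hz).symm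
        have h4 : D x ≤ D u := humax x hxS
        omega
      exact ⟨wx, fun z hz => Finset.mem_erase.2 ⟨fun h => hu_not (h ▸ hz), hwxS z hz⟩⟩
    obtain ⟨l', hlen', hnd', htf', hrnd', hrtrue'⟩ :=
      ih (s - 1) (by omega) S' hS'card v₀ hv₀' hconn'
    obtain ⟨a, b, hab, hcur⟩ : ∃ a b, l' = a ++ b ∧ curV v₀ (stkRun v₀ [v₀] a) = w := by
      have hw' : w ∈ S' := Finset.mem_erase.2 ⟨hwu_ne, hwS⟩
      rw [← htf', List.mem_toFinset] at hw'
      rcases List.mem_cons.1 hw' with rfl | hw''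
      · exact ⟨[], l', rfl, rfl⟩
      · exact exposure v₀ [v₀] l' w hw''
    obtain ⟨t, htap, htrand⟩ := exists_tok η w u hadj.symm
    set st := stkRun v₀ [v₀] a with hst
    have hpush : pushRun v₀ [v₀] (a ++ some t :: none :: b)
        = pushRun v₀ [v₀] a ++ u :: pushRun v₀ st b := by
      rw [pushRun_append]
      congr 1
      rw [pushRun, hcur, htap]
      rfl
    have hpush' : pushRun v₀ [v₀] l' = pushRun v₀ [v₀] a ++ pushRun v₀ st b := by
      rw [hab, pushRun_append]
    have hperm : (v₀ :: pushRun v₀ [v₀] (a ++ some t :: none :: b)).Perm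
        (u :: v₀ :: pushRun v₀ [v₀] l') := by
      rw [hpush, hpush']
      have h1 : v₀ :: (pushRun v₀ [v₀] a ++ u :: pushRun v₀ st b)
          = (v₀ :: pushRun v₀ [v₀] a) ++ u :: pushRun v₀ st b := rfl
      rw [h1]
      exact List.perm_middle
    have hunotold : u ∉ (v₀ :: pushRun v₀ [v₀] l') := by
      intro hu_in
      have : u ∈ S' := htf' ▸ List.mem_toFinset.2 hu_in
      exact (Finset.notMem_erase u S) this
    have hrp : rpRun v₀ [v₀] (a ++ some t :: none :: b)
        = rpRun v₀ [v₀] a ++ ((if isRandStep (some t) then [s(w, u)] else [])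
            ++ rpRun v₀ st b) := by
      rw [rpRun_append]
      congr 1
      rw [rpRun, hcur, htap]
      rfl
    have hrp' : rpRun v₀ [v₀] l' = rpRun v₀ [v₀] a ++ rpRun v₀ st b := by
      rw [hab, rpRun_append]
    have hnotin : s(w, u) ∉ rpRun v₀ [v₀] l' := by
      intro hmem
      have hu_in := rpRun_mem v₀ [v₀] l' _ hmem u (Sym2.mem_mk_right w u)
      rcases hu_in with h | h | h
      · exact huv₀ h
      · exact huv₀ (by simpa using h)
      · have : u ∈ S' := htf' ▸ List.mem_toFinset.2 (List.mem_cons_of_mem _ h)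
        exact (Finset.notMem_erase u S) this
    refine ⟨a ++ some t :: none :: b, ?_, ?_, ?_, ?_, ?_⟩
    · simp only [List.length_append, List.length_cons]
      have : a.length + b.length = l'.length := by rw [hab, List.length_append]
      omega
    · exact hperm.nodup_iff.2 (List.nodup_cons.2 ⟨hunotold, hnd'⟩)
    · ext z
      rw [List.mem_toFinset, hperm.mem_iff, ← List.mem_toFinset, List.toFinset_cons, htf']
      rw [Finset.mem_insert, Finset.mem_erase]
      constructor
      · rintro (rfl | hz)
        · exact huS
        · exact hz.2
      · intro hz
        by_cases hzu : z = u
        · exact Or.inl hzu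
        · exact Or.inr ⟨hzu, hz⟩
    · rw [hrp]
      by_cases hr : isRandStep (some t : NWStep n k)
      · rw [if_pos hr]
        have hshape : rpRun v₀ [v₀] a ++ ([s(w, u)] ++ rpRun v₀ st b)
            = rpRun v₀ [v₀] a ++ s(w, u) :: rpRun v₀ st b := rfl
        rw [hshape, List.nodup_middle, List.nodup_cons]
        refine ⟨fun hmem => hnotin (hrp' ▸ hmem), hrp' ▸ hrnd'⟩
      · rw [if_neg hr]
        simpa using (hrp' ▸ hrnd')
    · intro e he
      rw [hrp] at he
      rcases List.mem_append.1 he with h | h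
      · exact hrtrue' e (hrp' ▸ List.mem_append_left _ h)
      · rcases List.mem_append.1 h with h' | h'
        · by_cases hr : isRandStep (some t : NWStep n k)
          · rw [if_pos hr] at h'
            rcases List.mem_singleton.1 h' with rfl
            exact htrand hr
          · rw [if_neg hr] at h'
            exact absurd h' List.not_mem_nil
        · exact hrtrue' e (hrp' ▸ List.mem_append_right _ h')

def stepW (n k : ℕ) (p θ : ℝ) : NWStep n k → ℝ
  | none => 1
  | some (.inl _) => θ
  | some (.inr _) => θ * p

lemma stepW_nonneg {n k : ℕ} {p θ : ℝ} (hp : 0 ≤ p) (hθ : 0 ≤ θ) (s : NWStep n k) :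
    0 ≤ stepW n k p θ s := by
  rcases s with _ | (t | t) <;> simp [stepW] <;> positivity

lemma list_prod_stepW {n k : ℕ} (p θ : ℝ) (l : List (NWStep n k)) :
    (l.map (stepW n k p θ)).prod
      = θ ^ (l.countP (fun s => s.isSome)) * p ^ (l.countP (fun s => isRandStep s)) := by
  induction l with
  | nil => simp
  | cons s l ih =>
    rcases s with _ | (t | t) <;>
      simp [List.countP_cons, stepW, isRandStep, ih, pow_succ] <;> ring

lemma sum_stepW (n k : ℕ) (p θ : ℝ) :
    ∑ s : NWStep n k, stepW n k p θ s = 1 + θ * (2 * k + n * p) := by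
  rw [Fintype.sum_option, Fintype.sum_sum_type, Fintype.sum_sum_type]
  simp only [stepW, Finset.sum_const, Finset.card_univ, Fintype.card_fin, nsmul_eq_mul]
  ring

lemma sum_all_codes (n k L : ℕ) (p θ : ℝ) :
    ∑ f : Fin L → NWStep n k, ∏ i, stepW n k p θ (f i) = (1 + θ * (2 * k + n * p)) ^ L := by
  rw [sum_pi_prod]
  simp only [sum_stepW n k p θ, Finset.prod_const, Finset.card_univ, Fintype.card_fin]

lemma nwPr_union {n : ℕ} {p : ℝ} (hp0 : 0 ≤ p) (hp1 : p ≤ 1) {ι : Type*} (I : Finset ι)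
    (A : (Sym2 (Fin n) → Bool) → Prop) (B : ι → (Sym2 (Fin n) → Bool) → Prop)
    (h : ∀ η, A η → ∃ i ∈ I, B i η) :
    nwPr n p A ≤ ∑ i ∈ I, nwPr n p (B i) := by
  have hswap : ∑ i ∈ I, nwPr n p (B i)
      = ∑ η : Sym2 (Fin n) → Bool, ∑ i ∈ I, (if B i η then nwWeight n p η else 0) := by
    rw [Finset.sum_comm]
    rfl
  rw [nwPr, hswap]
  refine Finset.sum_le_sum fun η _ => ?_
  have hnn : ∀ i ∈ I, (0:ℝ) ≤ (if B i η then nwWeight n p η else 0) := by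
    intro i _
    split_ifs
    · exact nwWeight_nonneg hp0 hp1 η
    · exact le_refl 0
  by_cases hA : A η
  · obtain ⟨i, hi, hBi⟩ := h η hA
    rw [if_pos hA]
    calc nwWeight n p η = (if B i η then nwWeight n p η else 0) := by rw [if_pos hBi]
      _ ≤ _ := Finset.single_le_sum hnn hi
  · rw [if_neg hA]
    exact Finset.sum_nonneg hnn

lemma ofFn_getD {α : Type*} (dflt : α) (l : List α) (L : ℕ) (h : l.length = L) :
    List.ofFn (fun i : Fin L => l.getD i dflt) = l := by
  apply List.ext_getElem (by simp [h])
  intro i h1 h2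
  rw [List.getElem_ofFn]
  exact List.getD_eq_getElem l dflt h2

lemma log_six_fifth : Real.log (6/5) ≤ 11/60 := by
  have h2 : Real.exp (11/60) = (Real.exp (11/1440))^24 := by
    rw [← Real.exp_nat_mul]; norm_num
  have h3 : (1 + 11/1440 : ℝ) ≤ Real.exp (11/1440) := by
    have := Real.add_one_le_exp (11/1440 : ℝ); linarith
  have h4 : ((1 + 11/1440 : ℝ))^24 ≤ (Real.exp (11/1440))^24 :=
    pow_le_pow_left₀ (by norm_num) h3 24
  have h5 : (6/5 : ℝ) ≤ (1 + 11/1440 : ℝ)^24 := by norm_num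
  have h1 : (6/5 : ℝ) ≤ Real.exp (11/60) := by rw [h2]; linarith
  calc Real.log (6/5) ≤ Real.log (Real.exp (11/60)) := Real.log_le_log (by norm_num) h1
    _ = 11/60 := Real.log_exp _

def goodCodes (n k : ℕ) [NeZero n] (j : ℕ) (S : Finset (Fin n)) :
    Finset (Fin n × (Fin (2 * (j - 1)) → NWStep n k)) :=
  Finset.univ.filter fun c =>
    (c.1 :: pushRun c.1 [c.1] (List.ofFn c.2)).Nodup ∧
    (c.1 :: pushRun c.1 [c.1] (List.ofFn c.2)).toFinset = S ∧
    (rpRun c.1 [c.1] (List.ofFn c.2)).Nodup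

def codeSum (n k : ℕ) [NeZero n] (p : ℝ) (j : ℕ) (S : Finset (Fin n)) : ℝ :=
  ∑ c ∈ goodCodes n k j S, p ^ (rpRun c.1 [c.1] (List.ofFn c.2)).length

lemma codeSum_nonneg (n k : ℕ) [NeZero n] {p : ℝ} (hp0 : 0 ≤ p) (j : ℕ) (S : Finset (Fin n)) :
    0 ≤ codeSum n k p j S :=
  Finset.sum_nonneg fun c _ => pow_nonneg hp0 _

lemma codeSum_bound (n k : ℕ) [NeZero n] {p : ℝ} (hp0 : 0 ≤ p) (hk : 1 ≤ k) (j : ℕ)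
    (𝒯 : Finset (Finset (Fin n))) (h𝒯 : ∀ S ∈ 𝒯, S.card = j) :
    ∑ S ∈ 𝒯, codeSum n k p j S ≤ (n : ℝ) * (4 * (2 * k + n * p)) ^ (j - 1) := by
  set a : ℝ := 2 * k + n * p with ha
  have hk1 : (1:ℝ) ≤ k := by exact_mod_cast hk
  have ha0 : 0 < a := by
    have hnp : (0:ℝ) ≤ n * p := by positivity
    rw [ha]; nlinarith
  set θ : ℝ := a⁻¹ with hθ
  have hθ0 : 0 ≤ θ := by positivity
  have hθa : θ * a = 1 := inv_mul_cancel₀ ha0.ne'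
  have hf : ∀ c : Fin n × (Fin (2 * (j - 1)) → NWStep n k),
      0 ≤ ∏ i, stepW n k p θ (c.2 i) :=
    fun c => Finset.prod_nonneg fun i _ => stepW_nonneg hp0 hθ0 _
  have hkey : ∀ S ∈ 𝒯, ∀ c ∈ goodCodes n k j S,
      (p : ℝ) ^ (rpRun c.1 [c.1] (List.ofFn c.2)).length
        = a ^ (j - 1) * ∏ i, stepW n k p θ (c.2 i) := by
    intro S hS c hc
    obtain ⟨hnd, htf, -⟩ := (Finset.mem_filter.1 hc).2
    have hlen1 : (c.1 :: pushRun c.1 [c.1] (List.ofFn c.2)).length = j := by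
      rw [← List.toFinset_card_of_nodup hnd, htf, h𝒯 S hS]
    have hsome : (List.ofFn c.2).countP (fun s => s.isSome) = j - 1 := by
      have hpl := pushRun_length c.1 [c.1] (List.ofFn c.2)
      simp only [List.length_cons] at hlen1
      omega
    have hrand : (rpRun c.1 [c.1] (List.ofFn c.2)).length
        = (List.ofFn c.2).countP (fun s => isRandStep s) := rpRun_length _ _ _
    have hprod : ∏ i, stepW n k p θ (c.2 i)
        = θ ^ (j - 1) * p ^ (rpRun c.1 [c.1] (List.ofFn c.2)).length := by
      have h1 : ((List.ofFn c.2).map (stepW n k p θ)).prod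
          = ∏ i, stepW n k p θ (c.2 i) := by
        rw [List.map_ofFn, List.prod_ofFn]
        rfl
      rw [← h1, list_prod_stepW, hsome, hrand]
    rw [hprod, ← mul_assoc, ← mul_pow, mul_comm a θ, hθa, one_pow, one_mul]
  have hdisj : (↑𝒯 : Set (Finset (Fin n))).PairwiseDisjoint (goodCodes n k j) := by
    intro S hS S' hS' hne
    simp only [Function.onFun]
    rw [Finset.disjoint_left]
    intro c hc hc'
    have h1 := (Finset.mem_filter.1 hc).2.2.1
    have h2 := (Finset.mem_filter.1 hc').2.2.1
    exact hne (h1.symm.trans h2)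
  calc ∑ S ∈ 𝒯, codeSum n k p j S
      = ∑ S ∈ 𝒯, ∑ c ∈ goodCodes n k j S, a ^ (j - 1) * ∏ i, stepW n k p θ (c.2 i) :=
        Finset.sum_congr rfl fun S hS => Finset.sum_congr rfl fun c hc => hkey S hS c hc
    _ = a ^ (j - 1) * ∑ S ∈ 𝒯, ∑ c ∈ goodCodes n k j S, ∏ i, stepW n k p θ (c.2 i) := by
        rw [Finset.mul_sum]
        exact Finset.sum_congr rfl fun S _ => (Finset.mul_sum _ _ _).symm
    _ ≤ a ^ (j - 1) *
        ∑ c : Fin n × (Fin (2 * (j - 1)) → NWStep n k), ∏ i, stepW n k p θ (c.2 i) := by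
        refine mul_le_mul_of_nonneg_left ?_ (pow_nonneg ha0.le _)
        rw [← Finset.sum_biUnion hdisj]
        exact Finset.sum_le_sum_of_subset_of_nonneg (Finset.subset_univ _)
          (fun c _ _ => hf c)
    _ = a ^ (j - 1) * ((n : ℝ) * 2 ^ (2 * (j - 1))) := by
        rw [Fintype.sum_prod_type]
        have hin : ∑ f : Fin (2 * (j - 1)) → NWStep n k, ∏ i, stepW n k p θ (f i)
              = 2 ^ (2 * (j - 1)) := by
          rw [sum_all_codes n k (2 * (j - 1)) p θ, ← ha]
          rw [hθa]
          norm_num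
        simp only [hin, Finset.sum_const, Finset.card_univ, Fintype.card_fin, nsmul_eq_mul]
    _ = (n : ℝ) * (4 * a) ^ (j - 1) := by
        rw [pow_mul, mul_pow]
        norm_num
        ring


set_option maxHeartbeats 2000000 in
/-- **Lemma (edge expansion of connected sets, large `c`).** Fix `k ≥ 1` and `c > 0` with
`c/720 − log(4(c+2k)) > 5`, let `n > c`, `p = c/n`, and let `H` be an `(n,k,p)` Newman–Watts
small world. Then the probability that some connected set `S` with `log n ≤ |S| ≤ 9n/10` has
`e(S,Sᶜ) ≤ c|S|/12` is at most `1/n³`. -/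
theorem expansion_of_connected_sets (k : ℕ) (hk : 1 ≤ k) (c : ℝ) (hc : 0 < c)
    (hbig : c / 720 - Real.log (4 * (c + 2 * k)) > 5) (n : ℕ) (hn : c < n) :
    nwPr n (c / n) (fun η => ∃ S : Finset (Fin n),
      connectedSet (nwGraph n k η) S ∧
      Real.log n ≤ (S.card : ℝ) ∧ (S.card : ℝ) ≤ 9 * n / 10 ∧
      (eCross (nwGraph n k η) S : ℝ) ≤ c * S.card / 12) ≤
    1 / (n : ℝ) ^ 3 := by
  have hn0 : (0:ℝ) < n := lt_trans hc hn
  have hnn : 0 < n := by exact_mod_cast hn0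
  haveI : NeZero n := ⟨hnn.ne'⟩
  set p : ℝ := c / n with hp
  have hp0 : 0 < p := div_pos hc hn0
  have hp1 : p < 1 := (div_lt_one hn0).2 hn
  have hnp : (n:ℝ) * p = c := by rw [hp]; field_simp
  have hk1 : (1:ℝ) ≤ k := by exact_mod_cast hk
  have h8 : (8:ℝ) ≤ 4 * (c + 2 * k) := by nlinarith
  have hlogA2 : (2:ℝ) ≤ Real.log (4 * (c + 2 * k)) := by
    rw [Real.le_log_iff_exp_le (by linarith)]
    have he := Real.exp_one_lt_d9
    have he2 : Real.exp 2 = Real.exp 1 ^ 2 := by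
      rw [← Real.exp_nat_mul]; norm_num
    have hp2 : Real.exp 1 ^ 2 ≤ 2.7182818286 ^ 2 :=
      pow_le_pow_left₀ (Real.exp_pos 1).le he.le 2
    calc Real.exp 2 = Real.exp 1 ^ 2 := he2
      _ ≤ 2.7182818286 ^ 2 := hp2
      _ ≤ 8 := by norm_num
      _ ≤ 4 * (c + 2 * k) := h8
  have hc5040 : (5040:ℝ) < c := by nlinarith
  have hn2 : (2:ℝ) ≤ n := by linarith
  have hlogn : 0 < Real.log n := Real.log_pos (by linarith)
  set lam : ℝ := Real.log (6/5) with hlam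
  have hlam0 : 0 ≤ lam := Real.log_nonneg (by norm_num)
  have hexplam : Real.exp (-lam) = 5/6 := by
    rw [hlam, Real.exp_neg, Real.exp_log (by norm_num : (0:ℝ) < 6/5)]
    norm_num
  have hlam60 : lam ≤ 11/60 := log_six_fifth
  set q : ℝ := 1 - p * (1 - Real.exp (-lam)) with hq
  have hq6 : q = 1 - p / 6 := by rw [hq, hexplam]; ring
  have hq0 : 0 ≤ q := by rw [hq6]; linarith
  have hqe : q ≤ Real.exp (-(p/6)) := by
    rw [hq6]
    have := Real.add_one_le_exp (-(p/6))
    linarith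
  set 𝒮 : Finset (Finset (Fin n)) := Finset.univ.filter
    (fun S => Real.log n ≤ (S.card : ℝ) ∧ (S.card : ℝ) ≤ 9 * n / 10) with h𝒮
  set K : ℕ → ℝ := fun j => Real.exp (lam * (c * j / 12)) * q ^ (j * (n - j)) with hK
  have hK0 : ∀ j, 0 ≤ K j := fun j => mul_nonneg (Real.exp_pos _).le (pow_nonneg hq0 _)
  -- Step 1
  have step1 : nwPr n p (fun η => ∃ S : Finset (Fin n),
      connectedSet (nwGraph n k η) S ∧
      Real.log n ≤ (S.card : ℝ) ∧ (S.card : ℝ) ≤ 9 * n / 10 ∧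
      (eCross (nwGraph n k η) S : ℝ) ≤ c * S.card / 12)
      ≤ ∑ S ∈ 𝒮, nwPr n p (fun η => connectedSet (nwGraph n k η) S ∧
          (eCross (nwGraph n k η) S : ℝ) ≤ c * S.card / 12) := by
    refine nwPr_union hp0.le hp1.le 𝒮 _ _ ?_
    rintro η ⟨S, h1, h2, h3, h4⟩
    exact ⟨S, Finset.mem_filter.2 ⟨Finset.mem_univ _, h2, h3⟩, h1, h4⟩
  -- Step 2
  have step2 : ∀ S ∈ 𝒮, nwPr n p (fun η => connectedSet (nwGraph n k η) S ∧
      (eCross (nwGraph n k η) S : ℝ) ≤ c * S.card / 12)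
      ≤ K S.card * codeSum n k p S.card S := by
    intro S hS
    have hcompl : Sᶜ.card = n - S.card := by
      rw [Finset.card_compl, Fintype.card_fin]
    have hstep : nwPr n p (fun η => connectedSet (nwGraph n k η) S ∧
        (eCross (nwGraph n k η) S : ℝ) ≤ c * S.card / 12)
        ≤ ∑ code ∈ goodCodes n k S.card S, nwPr n p (fun η =>
            (∀ e ∈ (rpRun code.1 [code.1] (List.ofFn code.2)).toFinset, η e = true) ∧
            (eCross (nwGraph n k η) S : ℝ) ≤ c * S.card / 12) := by
      refine nwPr_union hp0.le hp1.le _ _ _ ?_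
      rintro η ⟨hconn, hcross⟩
      have hconn' : (SimpleGraph.induce (↑S) (nwGraph n k η)).Connected := hconn
      obtain ⟨⟨v₀, hv₀⟩⟩ := hconn'.nonempty
      have hv₀S : v₀ ∈ S := hv₀
      obtain ⟨l, hlen, hnd, htf, hrnd, htrue⟩ :=
        build_main η S.card S rfl v₀ hv₀S
          (conn_to_walks (nwGraph n k η) S hconn' v₀ hv₀S)
      refine ⟨(v₀, fun i : Fin (2 * (S.card - 1)) => l.getD i none), ?_, ?_, hcross⟩
      · have hofn : List.ofFn (fun i : Fin (2 * (S.card - 1)) => l.getD i none) = l :=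
          ofFn_getD none l _ hlen
        refine Finset.mem_filter.2 ⟨Finset.mem_univ _, ?_, ?_, ?_⟩
        · rw [hofn]; exact hnd
        · rw [hofn]; exact htf
        · rw [hofn]; exact hrnd
      · have hofn : List.ofFn (fun i : Fin (2 * (S.card - 1)) => l.getD i none) = l :=
          ofFn_getD none l _ hlen
        intro e he
        rw [hofn] at he
        exact htrue e (List.mem_toFinset.1 he)
    have hper : ∀ code ∈ goodCodes n k S.card S,
        nwPr n p (fun η =>
            (∀ e ∈ (rpRun code.1 [code.1] (List.ofFn code.2)).toFinset, η e = true) ∧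
            (eCross (nwGraph n k η) S : ℝ) ≤ c * S.card / 12)
        ≤ p ^ (rpRun code.1 [code.1] (List.ofFn code.2)).length * K S.card := by
      intro code hcode
      obtain ⟨hnd, htf, hnodup⟩ := (Finset.mem_filter.1 hcode).2
      have hT : ∀ e ∈ (rpRun code.1 [code.1] (List.ofFn code.2)).toFinset,
          ∀ v ∈ e, v ∈ S := by
        intro e he v hv
        have hmem := rpRun_mem code.1 [code.1] (List.ofFn code.2) e
          (List.mem_toFinset.1 he) v hv
        rw [← htf, List.mem_toFinset]
        rcases hmem with h | h | h
        · exact h ▸ List.mem_cons_self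
        · have : v = code.1 := by simpa using h
          exact this ▸ List.mem_cons_self
        · exact List.mem_cons_of_mem _ h
      have hpc := percode n k p hp0.le hp1.le lam hlam0 S
        (rpRun code.1 [code.1] (List.ofFn code.2)).toFinset hT (c * S.card / 12)
      rw [List.toFinset_card_of_nodup hnodup, hcompl] at hpc
      have hKeq : K S.card = Real.exp (lam * (c * S.card / 12)) * q ^ (S.card * (n - S.card)) := rfl
      rw [hKeq, hq]
      refine le_trans (le_of_eq ?_) hpc
      rw [nwPr]
      exact Finset.sum_congr rfl fun η _ => by congr
    calc nwPr n p (fun η => connectedSet (nwGraph n k η) S ∧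
        (eCross (nwGraph n k η) S : ℝ) ≤ c * S.card / 12) ≤ _ := hstep
      _ ≤ ∑ code ∈ goodCodes n k S.card S,
            p ^ (rpRun code.1 [code.1] (List.ofFn code.2)).length * K S.card :=
          Finset.sum_le_sum hper
      _ = K S.card * codeSum n k p S.card S := by
          rw [codeSum, ← Finset.sum_mul, mul_comm]
  -- Step 3
  have hmaps : ∀ S ∈ 𝒮, S.card ∈ Finset.range (n+1) := by
    intro S _
    refine Finset.mem_range.2 (Nat.lt_succ_of_le ?_)
    calc S.card ≤ Fintype.card (Fin n) := Finset.card_le_univ S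
      _ = n := Fintype.card_fin n
  have step3 : ∑ S ∈ 𝒮, K S.card * codeSum n k p S.card S
      = ∑ j ∈ Finset.range (n+1),
          ∑ S ∈ 𝒮.filter (fun S => S.card = j), K S.card * codeSum n k p S.card S :=
    (Finset.sum_fiberwise_of_maps_to hmaps _).symm
  -- Step 4
  have step4 : ∀ j ∈ Finset.range (n+1),
      ∑ S ∈ 𝒮.filter (fun S => S.card = j), K S.card * codeSum n k p S.card S
      ≤ if 1 ≤ j then (n:ℝ) * ((n:ℝ)^5)⁻¹ else 0 := by
    intro j _
    rcases Finset.eq_empty_or_nonempty (𝒮.filter (fun S => S.card = j)) with hemp | hne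
    · rw [hemp, Finset.sum_empty]
      split_ifs
      · positivity
      · exact le_refl 0
    · obtain ⟨S₀, hS₀⟩ := hne
      have hS₀𝒮 := (Finset.mem_filter.1 hS₀).1
      have hcard : S₀.card = j := (Finset.mem_filter.1 hS₀).2
      obtain ⟨-, hlogj, hj910⟩ := Finset.mem_filter.1 hS₀𝒮
      rw [hcard] at hlogj hj910
      have hj0 : (0:ℝ) ≤ j := Nat.cast_nonneg j
      have hj1 : 1 ≤ j := by
        by_contra h
        push_neg at h
        have : j = 0 := by omega
        rw [this] at hlogj
        simp at hlogj
        linarith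
      rw [if_pos hj1]
      have hsum : ∑ S ∈ 𝒮.filter (fun S => S.card = j), K S.card * codeSum n k p S.card S
          = K j * ∑ S ∈ 𝒮.filter (fun S => S.card = j), codeSum n k p j S := by
        rw [Finset.mul_sum]
        refine Finset.sum_congr rfl fun S hS => ?_
        rw [(Finset.mem_filter.1 hS).2]
      rw [hsum]
      have hcb := codeSum_bound n k hp0.le hk j (𝒮.filter (fun S => S.card = j))
        (fun S hS => (Finset.mem_filter.1 hS).2)
      have hjn : j ≤ n := by
        have : (j:ℝ) ≤ n := by linarith
        exact_mod_cast this
      -- numeric bound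
      have hnum : K j * ((n:ℝ) * (4 * (2 * k + n * p)) ^ (j - 1)) ≤ (n:ℝ) * ((n:ℝ)^5)⁻¹ := by
        have hA : (4 : ℝ) * (2 * k + n * p) = 4 * (c + 2 * k) := by rw [hnp]; ring
        rw [hA]
        set A : ℝ := 4 * (c + 2 * k) with hAdef
        have hA0 : (0:ℝ) < A := by linarith
        have hlogA0 : 0 ≤ Real.log A := by linarith
        have e1 : A ^ (j-1) ≤ Real.exp ((j:ℝ) * Real.log A) := by
          have h1 : A ^ (j-1) = Real.exp (((j-1:ℕ):ℝ) * Real.log A) := by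
            rw [Real.exp_nat_mul, Real.exp_log hA0]
          rw [h1]
          apply Real.exp_le_exp.2
          have : ((j-1:ℕ):ℝ) ≤ (j:ℝ) := by
            exact_mod_cast Nat.sub_le j 1
          nlinarith
        have hm : ((j * (n - j) : ℕ) : ℝ) = (j:ℝ) * ((n:ℝ) - j) := by
          push_cast [Nat.cast_sub hjn]
          ring
        have e2 : q ^ (j*(n-j)) ≤ Real.exp (-(c*j/60)) := by
          calc q ^ (j*(n-j)) ≤ (Real.exp (-(p/6))) ^ (j*(n-j)) :=
                pow_le_pow_left₀ hq0 hqe _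
            _ = Real.exp (((j*(n-j):ℕ):ℝ) * (-(p/6))) := by
                rw [Real.exp_nat_mul]
            _ ≤ Real.exp (-(c*j/60)) := by
                apply Real.exp_le_exp.2
                rw [hm]
                have h1 : (n:ℝ) - j ≥ (n:ℝ)/10 := by linarith
                have h2 : (j:ℝ) * ((n:ℝ) - j) * (p/6) ≥ (j:ℝ) * ((n:ℝ)/10) * (p/6) := by
                  have := mul_le_mul_of_nonneg_right
                    (mul_le_mul_of_nonneg_left h1 hj0) (by linarith : (0:ℝ) ≤ p/6)
                  linarith
                have h3 : (j:ℝ) * ((n:ℝ)/10) * (p/6) = c * j / 60 := by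
                  rw [hp]
                  field_simp
                  ring
                linarith
        have e3 : Real.exp (lam * (c * j / 12)) ≤ Real.exp (11*(c*(j:ℝ))/720) := by
          apply Real.exp_le_exp.2
          have hcj : (0:ℝ) ≤ c * j / 12 := by positivity
          nlinarith
        calc K j * ((n:ℝ) * A ^ (j-1))
            = (n:ℝ) * (Real.exp (lam * (c * j / 12)) * q ^ (j*(n-j)) * A ^ (j-1)) := by
              rw [hK]; ring
          _ ≤ (n:ℝ) * (Real.exp (11*(c*(j:ℝ))/720) * Real.exp (-(c*j/60))
                * Real.exp ((j:ℝ) * Real.log A)) := by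
              refine mul_le_mul_of_nonneg_left ?_ hn0.le
              refine mul_le_mul (mul_le_mul e3 e2 (pow_nonneg hq0 _) (Real.exp_pos _).le)
                e1 (pow_nonneg (by linarith : (0:ℝ) ≤ A) _) (by positivity)
          _ = (n:ℝ) * Real.exp ((j:ℝ) * (Real.log A - c/720)) := by
              rw [← Real.exp_add, ← Real.exp_add]
              congr 1
              ring
          _ ≤ (n:ℝ) * Real.exp (-(5*(j:ℝ))) := by
              refine mul_le_mul_of_nonneg_left (Real.exp_le_exp.2 ?_) hn0.le
              have hA5 : Real.log A - c/720 ≤ -5 := by linarith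
              nlinarith
          _ ≤ (n:ℝ) * ((n:ℝ)^5)⁻¹ := by
              refine mul_le_mul_of_nonneg_left ?_ hn0.le
              have h1 : -(5*(j:ℝ)) ≤ -(5 * Real.log n) := by nlinarith
              have h2 : Real.exp (-(5*(j:ℝ))) ≤ Real.exp (-(5 * Real.log n)) :=
                Real.exp_le_exp.2 h1
              have h3 : Real.exp (-(5 * Real.log n)) = ((n:ℝ)^5)⁻¹ := by
                rw [Real.exp_neg]
                congr 1
                rw [show (5:ℝ) * Real.log n = ((5:ℕ):ℝ) * Real.log n by norm_num,
                  Real.exp_nat_mul, Real.exp_log hn0]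
              linarith [h2, h3.symm.le]
      calc K j * ∑ S ∈ 𝒮.filter (fun S => S.card = j), codeSum n k p j S
          ≤ K j * ((n:ℝ) * (4 * (2 * k + n * p)) ^ (j - 1)) :=
            mul_le_mul_of_nonneg_left hcb (hK0 j)
        _ ≤ (n:ℝ) * ((n:ℝ)^5)⁻¹ := hnum
  -- Final
  have hfilter : (Finset.range (n+1)).filter (fun j => 1 ≤ j) = Finset.Ico 1 (n+1) := by
    ext j
    simp only [Finset.mem_filter, Finset.mem_range, Finset.mem_Ico]
    omega
  calc nwPr n p (fun η => ∃ S : Finset (Fin n),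
      connectedSet (nwGraph n k η) S ∧
      Real.log n ≤ (S.card : ℝ) ∧ (S.card : ℝ) ≤ 9 * n / 10 ∧
      (eCross (nwGraph n k η) S : ℝ) ≤ c * S.card / 12)
      ≤ ∑ S ∈ 𝒮, nwPr n p (fun η => connectedSet (nwGraph n k η) S ∧
          (eCross (nwGraph n k η) S : ℝ) ≤ c * S.card / 12) := step1
    _ ≤ ∑ S ∈ 𝒮, K S.card * codeSum n k p S.card S := Finset.sum_le_sum step2
    _ = ∑ j ∈ Finset.range (n+1),
          ∑ S ∈ 𝒮.filter (fun S => S.card = j), K S.card * codeSum n k p S.card S := step3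
    _ ≤ ∑ j ∈ Finset.range (n+1), (if 1 ≤ j then (n:ℝ) * ((n:ℝ)^5)⁻¹ else 0) :=
        Finset.sum_le_sum step4
    _ = ((n:ℝ) * ((n:ℝ)^5)⁻¹) * n := by
        rw [Finset.sum_ite, Finset.sum_const_zero, add_zero, Finset.sum_const, hfilter,
          Nat.card_Ico, nsmul_eq_mul]
        simp only [Nat.add_sub_cancel]
        ring
    _ ≤ 1 / (n : ℝ) ^ 3 := by
        have : ((n:ℝ) * ((n:ℝ)^5)⁻¹) * n = 1 / (n:ℝ)^3 := by
          field_simp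
        rw [this]


end
end

section
/- Fix an integer k ≥ 1 and any c > 0, let p = c/n, and let H be an (n,k,p) Newman–Watts small world. Then there exists β = β(c) ∈ (0,1) such that for all n sufficiently large, P(there exists S ⊆ [n] with |S| > (1−β)n and e(S) ≤ |E(H)|) ≤ (1−β)^n. -/
open scoped Classical

noncomputable section

variable {V : Type*} [Fintype V] [DecidableEq V]

-- AUX LEMMAS (to be inserted above the theorem)
section AuxNW
open Finset

lemma aux_choose_le_two_pow (n k : ℕ) : n.choose k ≤ 2 ^ n := by
  rcases le_or_gt k n with h | h
  · rw [← Nat.sum_range_choose n]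
    exact Finset.single_le_sum (f := fun m => n.choose m) (fun i _ => Nat.zero_le _)
      (Finset.mem_range.mpr (by omega))
  · rw [Nat.choose_eq_zero_of_lt h]; exact Nat.zero_le _

lemma aux_pow_self_le (q : ℕ) : q ^ q ≤ 4 ^ q * q.factorial := by
  have h1 : q ^ q ≤ (2 * q).descFactorial q := by
    rw [Nat.descFactorial_eq_prod_range]
    calc q ^ q = ∏ _i ∈ Finset.range q, q := by
          rw [Finset.prod_const, Finset.card_range]
      _ ≤ ∏ i ∈ Finset.range q, (2 * q - i) :=
          Finset.prod_le_prod' fun i hi => by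
            have := Finset.mem_range.mp hi; omega
  have h2 := Nat.descFactorial_eq_factorial_mul_choose (2 * q) q
  have h3 : (2 * q).choose q ≤ 2 ^ (2 * q) := aux_choose_le_two_pow _ _
  have h4 : (2 : ℕ) ^ (2 * q) = 4 ^ q := by rw [pow_mul]; norm_num
  calc q ^ q ≤ (2 * q).descFactorial q := h1
    _ = q.factorial * (2 * q).choose q := h2
    _ ≤ q.factorial * 4 ^ q := Nat.mul_le_mul_left _ (h4 ▸ h3)
    _ = 4 ^ q * q.factorial := Nat.mul_comm _ _

lemma aux_sum_prod_bool {ι : Type*} [DecidableEq ι] [Fintype ι] (g : ι → Bool → ℝ) :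
    ∑ η : ι → Bool, ∏ i, g i (η i) = ∏ i, (g i true + g i false) := by
  rw [show (∏ i, (g i true + g i false)) = ∏ i, ∑ b : Bool, g i b by
    simp [Fintype.sum_bool]]
  rw [Finset.prod_univ_sum, Fintype.piFinset_univ]

lemma aux_nwWeight_nonneg {n : ℕ} {p : ℝ} (h0 : 0 ≤ p) (h1 : p ≤ 1)
    (η : Sym2 (Fin n) → Bool) : 0 ≤ nwWeight n p η := by
  unfold nwWeight
  apply Finset.prod_nonneg
  intro e _
  split <;> linarith

lemma aux_nwPr_union {n : ℕ} {p : ℝ} (h0 : 0 ≤ p) (h1 : p ≤ 1) {ι : Type*} (s : Finset ι)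
    (A : (Sym2 (Fin n) → Bool) → Prop) (B : ι → (Sym2 (Fin n) → Bool) → Prop)
    (h : ∀ η, A η → ∃ i ∈ s, B i η) :
    nwPr n p A ≤ ∑ i ∈ s, nwPr n p (B i) := by
  unfold nwPr
  rw [Finset.sum_comm]
  apply Finset.sum_le_sum
  intro η _
  by_cases hA : A η
  · obtain ⟨i, hi, hB⟩ := h η hA
    rw [if_pos hA]
    calc nwWeight n p η = (if B i η then nwWeight n p η else 0) := by rw [if_pos hB]
      _ ≤ ∑ j ∈ s, (if B j η then nwWeight n p η else 0) :=
        Finset.single_le_sum (f := fun j => if B j η then nwWeight n p η else 0) (fun j _ => by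
          split
          · exact aux_nwWeight_nonneg h0 h1 η
          · exact le_rfl) hi
  · rw [if_neg hA]
    exact Finset.sum_nonneg fun j _ => by
      split
      · exact aux_nwWeight_nonneg h0 h1 η
      · exact le_rfl

lemma aux_nwPr_forall_true {n : ℕ} (p : ℝ) (Q : Finset (Sym2 (Fin n))) :
    nwPr n p (fun η => ∀ e ∈ Q, η e = true) = p ^ Q.card := by
  unfold nwPr nwWeight
  have key : ∀ η : Sym2 (Fin n) → Bool,
      (if (∀ e ∈ Q, η e = true) then ∏ e, (if η e then p else 1 - p) else 0)
      = ∏ e, (fun (e : Sym2 (Fin n)) (b : Bool) =>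
          if e ∈ Q then (if b then p else 0) else (if b then p else 1 - p)) e (η e) := by
    intro η
    by_cases h : ∀ e ∈ Q, η e = true
    · rw [if_pos h]
      apply Finset.prod_congr rfl
      intro e _
      by_cases he : e ∈ Q
      · simp [he, h e he]
      · simp [he]
    · rw [if_neg h]
      push_neg at h
      obtain ⟨e, heQ, hne⟩ := h
      have hfe : η e = false := by simpa using hne
      rw [eq_comm]
      apply Finset.prod_eq_zero (Finset.mem_univ e)
      simp [heQ, hfe]
  trans (∑ η : Sym2 (Fin n) → Bool, ∏ e, (fun (e : Sym2 (Fin n)) (b : Bool) =>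
      if e ∈ Q then (if b then p else 0) else (if b then p else 1 - p)) e (η e))
  · exact Finset.sum_congr rfl fun η _ => by convert key η using 2
  refine (aux_sum_prod_bool (fun (e : Sym2 (Fin n)) (b : Bool) =>
      if e ∈ Q then (if b then p else 0) else (if b then p else 1 - p))).trans ?_
  trans (∏ e : Sym2 (Fin n), if e ∈ Q then p else 1)
  · exact Finset.prod_congr rfl fun e _ => by split <;> simp
  · rw [Finset.prod_ite_mem, Finset.univ_inter, Finset.prod_const]

lemma nwGraph_adj {n k : ℕ} (η : Sym2 (Fin n) → Bool) (x y : Fin n) :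
    (nwGraph n k η).Adj x y ↔ x ≠ y ∧ ((y - x).val ≤ k ∨ (x - y).val ≤ k ∨ η s(x, y) = true) :=
  Iff.rfl

lemma aux_ring_count {n k : ℕ} (hn : 2 * k + 1 ≤ n) (x : Fin n) :
    (Finset.univ.filter fun u : Fin n =>
      x ≠ u ∧ ((u - x).val ≤ k ∨ (x - u).val ≤ k)).card = 2 * k := by
  haveI : NeZero n := ⟨by omega⟩
  have key : (Finset.univ.filter fun u : Fin n =>
      x ≠ u ∧ ((u - x).val ≤ k ∨ (x - u).val ≤ k)).card
      = (Finset.univ.filter fun z : Fin n => z ≠ 0 ∧ (z.val ≤ k ∨ (-z).val ≤ k)).card := by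
    apply Finset.card_nbij' (fun u => u - x) (fun z => z + x)
    · intro u hu
      simp only [Finset.mem_coe, Finset.mem_filter, Finset.mem_univ, true_and] at hu ⊢
      refine ⟨fun h => hu.1 (sub_eq_zero.mp h).symm, ?_⟩
      rcases hu.2 with h | h
      · exact Or.inl h
      · exact Or.inr (by rwa [neg_sub])
    · intro z hz
      simp only [Finset.mem_coe, Finset.mem_filter, Finset.mem_univ, true_and] at hz ⊢
      constructor
      · intro h
        exact hz.1 (right_eq_add.mp h)
      · rcases hz.2 with h | h
        · exact Or.inl (by rwa [add_sub_cancel_right])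
        · exact Or.inr (by rwa [show x - (z + x) = -z by abel])
    · intro u _; exact sub_add_cancel u x
    · intro z _; exact add_sub_cancel_right z x
  rw [key]
  have hval : ∀ z : Fin n, z ≠ 0 → (-z).val = n - z.val := by
    intro z hz
    have h1 : 1 ≤ z.val := by
      rcases Nat.eq_zero_or_pos z.val with h0 | h0
      · exact absurd (Fin.ext (by simpa using h0)) hz
      · exact h0
    have h2 : z.val < n := z.isLt
    rw [Fin.neg_def]
    simp only []
    exact Nat.mod_eq_of_lt (by omega)
  have hiff : ∀ z : Fin n, (z ≠ 0 ∧ (z.val ≤ k ∨ (-z).val ≤ k)) ↔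
      ((1 ≤ z.val ∧ z.val ≤ k) ∨ n - k ≤ z.val) := by
    intro z
    have h2 : z.val < n := z.isLt
    have hz0 : z ≠ 0 ↔ 1 ≤ z.val := by
      rw [Ne, Fin.ext_iff, Fin.val_zero]; omega
    constructor
    · rintro ⟨hz, h | h⟩
      · exact Or.inl ⟨hz0.mp hz, h⟩
      · rw [hval z hz] at h
        exact Or.inr (by omega)
    · rintro (⟨ha, hb⟩ | h)
      · exact ⟨hz0.mpr ha, Or.inl hb⟩
      · have hz : z ≠ 0 := hz0.mpr (by omega)
        exact ⟨hz, Or.inr (by rw [hval z hz]; omega)⟩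
  rw [Finset.filter_congr fun z _ => hiff z]
  rw [Finset.filter_or, Finset.card_union_of_disjoint]
  · have c1 : (Finset.univ.filter fun z : Fin n => 1 ≤ z.val ∧ z.val ≤ k).card = k := by
      rw [← Finset.card_image_of_injective _ Fin.val_injective]
      have himg : (Finset.univ.filter fun z : Fin n => 1 ≤ z.val ∧ z.val ≤ k).image Fin.val
          = Finset.Icc 1 k := by
        ext v
        simp only [Finset.mem_image, Finset.mem_filter, Finset.mem_univ, true_and,
          Finset.mem_Icc]
        constructor
        · rintro ⟨z, hz, rfl⟩; exact hz
        · rintro ⟨h1v, h2v⟩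
          exact ⟨⟨v, by omega⟩, ⟨h1v, h2v⟩, rfl⟩
      rw [himg, Nat.card_Icc]
      omega
    have c2 : (Finset.univ.filter fun z : Fin n => n - k ≤ z.val).card = k := by
      rw [← Finset.card_image_of_injective _ Fin.val_injective]
      have himg : (Finset.univ.filter fun z : Fin n => n - k ≤ z.val).image Fin.val
          = Finset.Icc (n - k) (n - 1) := by
        ext v
        simp only [Finset.mem_image, Finset.mem_filter, Finset.mem_univ, true_and,
          Finset.mem_Icc]
        constructor
        · rintro ⟨z, hz, rfl⟩; exact ⟨hz, by have := z.isLt; omega⟩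
        · rintro ⟨h1v, h2v⟩
          exact ⟨⟨v, by omega⟩, h1v, rfl⟩
      rw [himg, Nat.card_Icc]
      omega
    rw [c1, c2]; omega
  · rw [Finset.disjoint_left]
    rintro z hz1 hz2
    simp only [Finset.mem_filter, Finset.mem_univ, true_and] at hz1 hz2
    omega

/-- Number of η-true neighbours of x. -/
def cEta {n : ℕ} (η : Sym2 (Fin n) → Bool) (x : Fin n) : ℕ :=
  (Finset.univ.filter fun u : Fin n => x ≠ u ∧ η s(x, u) = true).card

lemma aux_gdeg_lower {n k : ℕ} (hn : 2 * k + 1 ≤ n) (η : Sym2 (Fin n) → Bool) (x : Fin n) :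
    2 * k ≤ gdeg (nwGraph n k η) x := by
  rw [← aux_ring_count hn x]
  apply Finset.card_le_card
  intro u hu
  simp only [Finset.mem_filter, Finset.mem_univ, true_and] at hu ⊢
  rw [nwGraph_adj]
  exact ⟨hu.1, by rcases hu.2 with h | h; exacts [Or.inl h, Or.inr (Or.inl h)]⟩

lemma aux_gdeg_upper {n k : ℕ} (hn : 2 * k + 1 ≤ n) (η : Sym2 (Fin n) → Bool) (x : Fin n) :
    gdeg (nwGraph n k η) x ≤ 2 * k + cEta η x := by
  unfold gdeg cEta
  rw [← aux_ring_count hn x]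
  calc (Finset.univ.filter fun u => (nwGraph n k η).Adj x u).card
      ≤ ((Finset.univ.filter fun u : Fin n => x ≠ u ∧ ((u - x).val ≤ k ∨ (x - u).val ≤ k)) ∪
         (Finset.univ.filter fun u : Fin n => x ≠ u ∧ η s(x, u) = true)).card := by
        apply Finset.card_le_card
        intro u hu
        simp only [Finset.mem_filter, Finset.mem_univ, true_and, Finset.mem_union,
          nwGraph_adj] at hu ⊢
        tauto
    _ ≤ _ := Finset.card_union_le _ _

lemma aux_double_count {n : ℕ} (η : Sym2 (Fin n) → Bool) (T : Finset (Fin n)) :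
    ∑ x ∈ T, cEta η x ≤ 2 * (Finset.univ.filter fun e : Sym2 (Fin n) =>
      ¬ e.IsDiag ∧ (∃ x ∈ T, x ∈ e) ∧ η e = true).card := by
  classical
  set F := Finset.univ.filter fun e : Sym2 (Fin n) =>
      ¬ e.IsDiag ∧ (∃ x ∈ T, x ∈ e) ∧ η e = true with hF
  set pairSet := (T ×ˢ (Finset.univ : Finset (Fin n))).filter
      (fun p : Fin n × Fin n => p.1 ≠ p.2 ∧ η s(p.1, p.2) = true) with hPS
  have step1 : ∑ x ∈ T, cEta η x = pairSet.card := by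
    rw [hPS, Finset.card_filter, Finset.sum_product]
    apply Finset.sum_congr rfl
    intro x _
    rw [cEta, Finset.card_filter]
  have step2 : pairSet.card ≤ 2 * ((pairSet.image fun p : Fin n × Fin n => s(p.1, p.2)).card) := by
    apply Finset.card_le_mul_card_image
    intro b hb
    obtain ⟨p, hp, hfp⟩ := Finset.mem_image.mp hb
    have hsub : (pairSet.filter fun a : Fin n × Fin n => s(a.1, a.2) = b) ⊆ {p, (p.2, p.1)} := by
      intro q hq
      obtain ⟨hq1, hq2⟩ := Finset.mem_filter.mp hq
      rw [← hfp] at hq2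
      rcases Sym2.eq_iff.mp hq2 with ⟨h1, h2⟩ | ⟨h1, h2⟩
      · exact Finset.mem_insert.mpr (Or.inl (Prod.ext h1 h2))
      · refine Finset.mem_insert.mpr (Or.inr ?_)
        simp [Prod.ext_iff, h1, h2]
    calc (pairSet.filter fun a : Fin n × Fin n => s(a.1, a.2) = b).card
        ≤ ({p, (p.2, p.1)} : Finset (Fin n × Fin n)).card := Finset.card_le_card hsub
      _ ≤ 2 := Finset.card_insert_le _ _ |>.trans (by simp)
  have step3 : (pairSet.image fun p : Fin n × Fin n => s(p.1, p.2)) ⊆ F := by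
    intro e he
    obtain ⟨p, hp, hfp⟩ := Finset.mem_image.mp he
    obtain ⟨hmem, hne, hη⟩ := Finset.mem_filter.mp hp
    obtain ⟨hT, -⟩ := Finset.mem_product.mp hmem
    rw [hF, Finset.mem_filter, ← hfp]
    exact ⟨Finset.mem_univ _, by rwa [Sym2.mk_isDiag_iff],
      ⟨p.1, hT, Sym2.mem_mk_left _ _⟩, hη⟩
  calc ∑ x ∈ T, cEta η x = pairSet.card := step1
    _ ≤ 2 * ((pairSet.image fun p : Fin n × Fin n => s(p.1, p.2)).card) := step2
    _ ≤ 2 * F.card := Nat.mul_le_mul_left _ (Finset.card_le_card step3)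

/-- Deterministic step: the event forces a small set T touched by many η-edges. -/
lemma aux_determ {n k : ℕ} {β : ℝ} (hk : 1 ≤ k) (hβ0 : 0 < β) (hβ4 : β ≤ 1/4)
    (hn : 2 * k + 1 ≤ n) (η : Sym2 (Fin n) → Bool)
    (S : Finset (Fin n)) (hS : (1 - β) * (n : ℝ) < S.card)
    (hle : eTot (nwGraph n k η) S ≤ edgeCount (nwGraph n k η)) :
    ∃ T : Finset (Fin n), (T.card : ℝ) ≤ β * n ∧
      n ≤ 2 * (Finset.univ.filter fun e : Sym2 (Fin n) =>
        ¬ e.IsDiag ∧ (∃ x ∈ T, x ∈ e) ∧ η e = true).card := by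
  refine ⟨Sᶜ, ?_, ?_⟩
  · have hcard : S.card + Sᶜ.card = n := by
      rw [Finset.card_add_card_compl, Fintype.card_fin]
    have : (Sᶜ.card : ℝ) = n - S.card := by
      have := congrArg (fun m : ℕ => (m : ℝ)) hcard
      push_cast at this
      linarith
    rw [this]
    nlinarith [hS]
  · -- eTot S ≤ eTot Sᶜ
    have hsplit : eTot (nwGraph n k η) S + eTot (nwGraph n k η) Sᶜ
        = ∑ v, gdeg (nwGraph n k η) v := Finset.sum_add_sum_compl S _
    have hST : eTot (nwGraph n k η) S ≤ eTot (nwGraph n k η) Sᶜ := by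
      have h2 : eTot (nwGraph n k η) S * 2 ≤
          eTot (nwGraph n k η) S + eTot (nwGraph n k η) Sᶜ := by
        rw [hsplit]
        exact (Nat.le_div_iff_mul_le (by norm_num)).mp hle
      omega
    have hlow : 2 * k * S.card ≤ eTot (nwGraph n k η) S := by
      rw [eTot]
      calc 2 * k * S.card = ∑ _x ∈ S, 2 * k := by rw [Finset.sum_const, smul_eq_mul, Nat.mul_comm]
        _ ≤ ∑ x ∈ S, gdeg (nwGraph n k η) x :=
            Finset.sum_le_sum fun x _ => aux_gdeg_lower hn η x
    have hup : eTot (nwGraph n k η) Sᶜ ≤ 2 * k * Sᶜ.card + ∑ x ∈ Sᶜ, cEta η x := by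
      rw [eTot]
      calc ∑ x ∈ Sᶜ, gdeg (nwGraph n k η) x ≤ ∑ x ∈ Sᶜ, (2 * k + cEta η x) :=
            Finset.sum_le_sum fun x _ => aux_gdeg_upper hn η x
        _ = 2 * k * Sᶜ.card + ∑ x ∈ Sᶜ, cEta η x := by
            rw [Finset.sum_add_distrib, Finset.sum_const, smul_eq_mul, Nat.mul_comm]
    -- now: n ≤ ∑_{x∈Sᶜ} cEta η x
    have hP : (n : ℝ) ≤ (∑ x ∈ Sᶜ, cEta η x : ℕ) := by
      have hchain : 2 * k * S.card ≤ 2 * k * Sᶜ.card + ∑ x ∈ Sᶜ, cEta η x :=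
        le_trans hlow (le_trans hST hup)
      have hcard : S.card + Sᶜ.card = n := by
        rw [Finset.card_add_card_compl, Fintype.card_fin]
      have hTc : (Sᶜ.card : ℝ) = n - S.card := by
        have := congrArg (fun m : ℕ => (m : ℝ)) hcard
        push_cast at this
        linarith
      have hchainR : (2 * k : ℝ) * S.card ≤ (2 * k : ℝ) * Sᶜ.card + (∑ x ∈ Sᶜ, cEta η x : ℕ) := by
        exact_mod_cast hchain
      have hk1 : (1 : ℝ) ≤ k := by exact_mod_cast hk
      have hn0 : (0 : ℝ) ≤ n := Nat.cast_nonneg n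
      have h1 : (1 - 2*β) * (n : ℝ) ≤ (S.card : ℝ) - (Sᶜ.card : ℝ) := by nlinarith [hS, hTc]
      have h3 : 2*(k:ℝ)*(((S.card:ℝ)) - (Sᶜ.card:ℝ)) ≤ (∑ x ∈ Sᶜ, cEta η x : ℕ) := by
        nlinarith [hchainR]
      have h4 : (0:ℝ) ≤ 2*(k:ℝ)*(1-2*β) - 1 := by
        nlinarith [mul_nonneg (by linarith : (0:ℝ) ≤ (k:ℝ)-1) (by linarith : (0:ℝ) ≤ 1-2*β)]
      have h5 : 2*(k:ℝ)*((1-2*β)*n) ≤ 2*(k:ℝ)*(((S.card:ℝ)) - (Sᶜ.card:ℝ)) := by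
        apply mul_le_mul_of_nonneg_left h1
        linarith
      nlinarith [mul_nonneg hn0 h4]
    have hdc := aux_double_count η Sᶜ
    have : (n : ℕ) ≤ ∑ x ∈ Sᶜ, cEta η x := by exact_mod_cast hP
    omega

end AuxNW


lemma aux_choose_le_two_pow' (n k : ℕ) : n.choose k ≤ 2 ^ n := by
  rcases le_or_gt k n with h | h
  · rw [← Nat.sum_range_choose n]
    exact Finset.single_le_sum (f := fun m => n.choose m) (fun i _ => Nat.zero_le _)
      (Finset.mem_range.mpr (by omega))
  · rw [Nat.choose_eq_zero_of_lt h]; exact Nat.zero_le _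

lemma aux_pow_self_le' (q : ℕ) : q ^ q ≤ 4 ^ q * q.factorial := by
  have h1 : q ^ q ≤ (2 * q).descFactorial q := by
    rw [Nat.descFactorial_eq_prod_range]
    calc q ^ q = ∏ _i ∈ Finset.range q, q := by
          rw [Finset.prod_const, Finset.card_range]
      _ ≤ ∏ i ∈ Finset.range q, (2 * q - i) :=
          Finset.prod_le_prod' fun i hi => by
            have := Finset.mem_range.mp hi; omega
  have h2 := Nat.descFactorial_eq_factorial_mul_choose (2 * q) q
  have h3 : (2 * q).choose q ≤ 2 ^ (2 * q) := aux_choose_le_two_pow' _ _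
  have h4 : (2 : ℕ) ^ (2 * q) = 4 ^ q := by rw [pow_mul]; norm_num
  calc q ^ q ≤ (2 * q).descFactorial q := h1
    _ = q.factorial * (2 * q).choose q := h2
    _ ≤ q.factorial * 4 ^ q := Nat.mul_le_mul_left _ (h4 ▸ h3)
    _ = 4 ^ q * q.factorial := Nat.mul_comm _ _

lemma aux_numeric {n m q : ℕ} {β c : ℝ} (hβ0 : 0 < β) (hβ4 : β ≤ 1/4) (hβc : β * c ≤ 1/64)
    (hc : 0 < c) (hn1 : 1 ≤ n) (hm : (m : ℝ) ≤ β * n) (hq1 : 1 ≤ q) (hnq : n ≤ 2 * q) :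
    (2:ℝ)^n * ((m*n).choose q : ℝ) * (c / n)^q ≤ (1-β)^n := by
  have hn0 : (0:ℝ) < n := by exact_mod_cast hn1
  have hq0 : (0:ℝ) < q := by exact_mod_cast hq1
  have hp0 : (0:ℝ) ≤ c / n := by positivity
  set x : ℝ := ((m : ℝ) * n) * (c / n) with hx
  have hx0 : 0 ≤ x := by positivity
  have hqf : (0:ℝ) < (q.factorial : ℝ) := by exact_mod_cast q.factorial_pos
  -- step A: choose * p^q ≤ x^q / q!
  have hA : ((m*n).choose q : ℝ) * (c / n)^q ≤ x^q / q.factorial := by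
    have hnat : (m*n).choose q * q.factorial ≤ (m*n)^q := by
      rw [Nat.mul_comm, ← Nat.descFactorial_eq_factorial_mul_choose]
      exact Nat.descFactorial_le_pow _ _
    have hreal : ((m*n).choose q : ℝ) ≤ ((m:ℝ) * n)^q / q.factorial := by
      rw [le_div_iff₀ hqf]
      calc ((m*n).choose q : ℝ) * q.factorial = (((m*n).choose q * q.factorial : ℕ) : ℝ) := by
            push_cast; ring
        _ ≤ (((m*n)^q : ℕ) : ℝ) := by exact_mod_cast hnat
        _ = ((m:ℝ) * n)^q := by push_cast; ring
    calc ((m*n).choose q : ℝ) * (c / n)^q ≤ (((m:ℝ) * n)^q / q.factorial) * (c / n)^q :=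
          mul_le_mul_of_nonneg_right hreal (pow_nonneg hp0 q)
      _ = x^q / q.factorial := by rw [hx, mul_pow]; ring
  -- step B: x^q / q! ≤ (4x/q)^q
  have hB : x^q / q.factorial ≤ (4*x/q)^q := by
    have hps : ((q:ℝ))^q ≤ 4^q * q.factorial := by
      calc ((q:ℝ))^q = ((q^q : ℕ) : ℝ) := by push_cast; ring
        _ ≤ ((4^q * q.factorial : ℕ) : ℝ) := by exact_mod_cast aux_pow_self_le' q
        _ = 4^q * (q.factorial : ℝ) := by push_cast; ring
    have key : x^q * ((q:ℝ))^q ≤ (4*x)^q * q.factorial := by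
      calc x^q * ((q:ℝ))^q ≤ x^q * (4^q * q.factorial) :=
            mul_le_mul_of_nonneg_left hps (pow_nonneg hx0 q)
        _ = (4*x)^q * q.factorial := by rw [mul_pow]; ring
    rw [div_le_iff₀ hqf, div_pow, div_mul_eq_mul_div, le_div_iff₀ (pow_pos hq0 q)]
    exact key
  -- step C: 4x/q ≤ 8 β c
  have hC : 4*x/q ≤ 8*β*c := by
    rw [div_le_iff₀ hq0]
    have hxe : x = (m:ℝ) * c := by
      rw [hx]; field_simp
    have hxle : x ≤ β * n * c := by
      rw [hxe]
      apply mul_le_mul_of_nonneg_right hm hc.le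
    have hn2q : (n:ℝ) ≤ 2 * q := by exact_mod_cast hnq
    have hβc0 : 0 ≤ β * c := mul_nonneg hβ0.le hc.le
    calc 4*x ≤ 4*(β*n*c) := by linarith
      _ = 4*(β*c)*n := by ring
      _ ≤ 4*(β*c)*(2*q) := by
          apply mul_le_mul_of_nonneg_left hn2q
          linarith
      _ = 8*β*c*q := by ring
  -- step D: (8βc)^q = s^(2q) ≤ s^n where s = sqrt(8βc)
  set s : ℝ := Real.sqrt (8*β*c) with hs
  have h8βc0 : (0:ℝ) ≤ 8*β*c := by nlinarith
  have hs0 : 0 ≤ s := Real.sqrt_nonneg _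
  have hs2 : s^2 = 8*β*c := Real.sq_sqrt h8βc0
  have hs1 : s ≤ 1 := Real.sqrt_le_one.mpr (by nlinarith)
  have hD : (8*β*c)^q ≤ s^n := by
    calc (8*β*c)^q = (s^2)^q := by rw [hs2]
      _ = s^(2*q) := by rw [← pow_mul]
      _ ≤ s^n := pow_le_pow_of_le_one hs0 hs1 hnq
  -- step E: 2 s ≤ 1 - β
  have hE : 2*s ≤ 1 - β := by
    have h9 : (8*β*c) ≤ 9/64 := by nlinarith
    have : s ≤ 3/8 := by
      calc s ≤ Real.sqrt (9/64) := Real.sqrt_le_sqrt h9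
        _ = 3/8 := by
          rw [show (9/64:ℝ) = (3/8)^2 by norm_num, Real.sqrt_sq (by norm_num : (0:ℝ) ≤ 3/8)]
    linarith
  -- combine
  have h4x0 : 0 ≤ 4*x/q := by positivity
  calc (2:ℝ)^n * ((m*n).choose q : ℝ) * (c / n)^q
      = (2:ℝ)^n * (((m*n).choose q : ℝ) * (c / n)^q) := by ring
    _ ≤ (2:ℝ)^n * (x^q / q.factorial) := by
        apply mul_le_mul_of_nonneg_left hA (by positivity)
    _ ≤ (2:ℝ)^n * (4*x/q)^q := by
        apply mul_le_mul_of_nonneg_left hB (by positivity)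
    _ ≤ (2:ℝ)^n * (8*β*c)^q := by
        apply mul_le_mul_of_nonneg_left (pow_le_pow_left₀ h4x0 hC q) (by positivity)
    _ ≤ (2:ℝ)^n * s^n := by
        apply mul_le_mul_of_nonneg_left hD (by positivity)
    _ = (2*s)^n := by rw [mul_pow]
    _ ≤ (1-β)^n := pow_le_pow_left₀ (by linarith) hE n


/-- **Lemma (expansion of very large sets, general `c`).** Fix `k ≥ 1` and `c > 0`, let
`p = c/n`, and let `H` be an `(n,k,p)` Newman–Watts small world. Then there is
`β = β(c) ∈ (0,1)` such that for all `n` sufficiently large, the probability that some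
`S ⊆ [n]` with `|S| > (1−β)n` has `e(S) ≤ |E(H)|` is at most `(1−β)^n`. -/
theorem expansion_of_very_large_sets_general (k : ℕ) (hk : 1 ≤ k) (c : ℝ) (hc : 0 < c) :
    ∃ β : ℝ, 0 < β ∧ β < 1 ∧ ∃ N : ℕ, ∀ n : ℕ, N ≤ n →
      nwPr n (c / n) (fun η => ∃ S : Finset (Fin n),
        (1 - β) * (n : ℝ) < S.card ∧
        eTot (nwGraph n k η) S ≤ edgeCount (nwGraph n k η)) ≤
      (1 - β) ^ n := by
  set β := min (1/4 : ℝ) (1/(64*c)) with hβdef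
  have hβ0 : 0 < β := lt_min (by norm_num) (by positivity)
  have hβ4 : β ≤ 1/4 := min_le_left _ _
  have hβc : β * c ≤ 1/64 := by
    have h := min_le_right (1/4 : ℝ) (1/(64*c))
    calc β * c ≤ (1/(64*c)) * c := mul_le_mul_of_nonneg_right h hc.le
      _ = 1/64 := by field_simp
  refine ⟨β, hβ0, by linarith, max (2*k+2) (⌈c⌉₊ + 1), ?_⟩
  intro n hn
  have hn2k : 2*k+1 ≤ n := le_trans (by omega) (le_trans (le_max_left _ _) hn)
  have hn1 : 1 ≤ n := by omega
  have hcn : c ≤ n := by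
    have h1 : (⌈c⌉₊ + 1 : ℕ) ≤ n := le_trans (le_max_right _ _) hn
    calc c ≤ (⌈c⌉₊ : ℝ) := Nat.le_ceil c
      _ ≤ n := by exact_mod_cast Nat.le_of_succ_le h1
  have hn0R : (0:ℝ) < n := by exact_mod_cast hn1
  set p := c / (n:ℝ) with hp
  have hp0 : 0 ≤ p := by positivity
  have hp1 : p ≤ 1 := by rw [hp, div_le_one hn0R]; exact hcn
  set m := ⌊β * (n:ℝ)⌋₊ with hm
  set q := (n+1)/2 with hq
  set touch := fun T : Finset (Fin n) => Finset.univ.filter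
      (fun e : Sym2 (Fin n) => ¬ e.IsDiag ∧ ∃ x ∈ T, x ∈ e) with htouch
  set 𝒯 := (Finset.univ : Finset (Finset (Fin n))).filter (fun T => T.card ≤ m) with hTT
  have step1 : nwPr n p (fun η => ∃ S : Finset (Fin n),
        (1 - β) * (n:ℝ) < S.card ∧ eTot (nwGraph n k η) S ≤ edgeCount (nwGraph n k η))
      ≤ ∑ T ∈ 𝒯, nwPr n p (fun η => ∃ Q ∈ (touch T).powersetCard q, ∀ e ∈ Q, η e = true) := by
    apply aux_nwPr_union hp0 hp1
    rintro η ⟨S, hS1, hS2⟩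
    obtain ⟨T, hT1, hT2⟩ := aux_determ hk hβ0 hβ4 hn2k η S hS1 hS2
    refine ⟨T, Finset.mem_filter.mpr ⟨Finset.mem_univ _, Nat.le_floor hT1⟩, ?_⟩
    set F := Finset.univ.filter (fun e : Sym2 (Fin n) =>
        ¬ e.IsDiag ∧ (∃ x ∈ T, x ∈ e) ∧ η e = true) with hF
    have hqF : q ≤ F.card := by omega
    obtain ⟨Q, hQF, hQcard⟩ := Finset.exists_subset_card_eq hqF
    refine ⟨Q, Finset.mem_powersetCard.mpr ⟨?_, hQcard⟩, ?_⟩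
    · intro e he
      have hmem := Finset.mem_filter.mp (hQF he)
      exact Finset.mem_filter.mpr ⟨Finset.mem_univ _, hmem.2.1, hmem.2.2.1⟩
    · intro e he
      exact (Finset.mem_filter.mp (hQF he)).2.2.2
  have step2 : ∀ T ∈ 𝒯,
      nwPr n p (fun η => ∃ Q ∈ (touch T).powersetCard q, ∀ e ∈ Q, η e = true)
      ≤ ((m*n).choose q : ℝ) * p ^ q := by
    intro T hT
    have htc : (touch T).card ≤ m * n := by
      have hsub : touch T ⊆ (T ×ˢ (Finset.univ : Finset (Fin n))).image
          (fun pr : Fin n × Fin n => s(pr.1, pr.2)) := by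
        intro e he
        revert he
        induction e using Sym2.ind with
        | _ a b =>
          intro he
          obtain ⟨-, hnd, x, hxT, hxe⟩ := Finset.mem_filter.mp he
          rcases Sym2.mem_iff.mp hxe with rfl | rfl
          · exact Finset.mem_image.mpr
              ⟨(x, b), Finset.mem_product.mpr ⟨hxT, Finset.mem_univ _⟩, rfl⟩
          · exact Finset.mem_image.mpr
              ⟨(x, a), Finset.mem_product.mpr ⟨hxT, Finset.mem_univ _⟩, Sym2.eq_swap⟩
      calc (touch T).card ≤ ((T ×ˢ (Finset.univ : Finset (Fin n))).image
            (fun pr : Fin n × Fin n => s(pr.1, pr.2))).card := Finset.card_le_card hsub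
        _ ≤ (T ×ˢ (Finset.univ : Finset (Fin n))).card := Finset.card_image_le
        _ = T.card * n := by rw [Finset.card_product, Finset.card_univ, Fintype.card_fin]
        _ ≤ m * n := Nat.mul_le_mul_right _ (Finset.mem_filter.mp hT).2
    calc nwPr n p (fun η => ∃ Q ∈ (touch T).powersetCard q, ∀ e ∈ Q, η e = true)
        ≤ ∑ Q ∈ (touch T).powersetCard q, nwPr n p (fun η => ∀ e ∈ Q, η e = true) :=
          aux_nwPr_union hp0 hp1 _ _ _ (fun η h => h)
      _ = ∑ Q ∈ (touch T).powersetCard q, p ^ q := by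
          refine Finset.sum_congr rfl fun Q hQ => ?_
          rw [aux_nwPr_forall_true, (Finset.mem_powersetCard.mp hQ).2]
      _ = ((touch T).card.choose q : ℝ) * p ^ q := by
          rw [Finset.sum_const, Finset.card_powersetCard, nsmul_eq_mul]
      _ ≤ ((m*n).choose q : ℝ) * p ^ q := by
          apply mul_le_mul_of_nonneg_right _ (pow_nonneg hp0 q)
          exact_mod_cast Nat.choose_le_choose q htc
  have step3 : (𝒯.card : ℝ) ≤ 2^n := by
    calc (𝒯.card : ℝ) ≤ ((Finset.univ : Finset (Finset (Fin n))).card : ℝ) := by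
          exact_mod_cast Finset.card_filter_le _ _
      _ = 2^n := by
          rw [Finset.card_univ, Fintype.card_finset, Fintype.card_fin]
          push_cast; ring
  calc nwPr n p (fun η => ∃ S : Finset (Fin n),
        (1 - β) * (n:ℝ) < S.card ∧ eTot (nwGraph n k η) S ≤ edgeCount (nwGraph n k η))
      ≤ ∑ T ∈ 𝒯, nwPr n p (fun η => ∃ Q ∈ (touch T).powersetCard q, ∀ e ∈ Q, η e = true) :=
        step1
    _ ≤ ∑ _T ∈ 𝒯, ((m*n).choose q : ℝ) * p ^ q := Finset.sum_le_sum step2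
    _ = (𝒯.card : ℝ) * (((m*n).choose q : ℝ) * p ^ q) := by
        rw [Finset.sum_const, nsmul_eq_mul]
    _ ≤ 2^n * (((m*n).choose q : ℝ) * p ^ q) := by
        apply mul_le_mul_of_nonneg_right step3
        positivity
    _ = (2:ℝ)^n * ((m*n).choose q : ℝ) * p ^ q := by ring
    _ ≤ (1-β)^n := by
        apply aux_numeric hβ0 hβ4 hβc hc hn1 _ _ _
        · exact Nat.floor_le (by positivity)
        · omega
        · omega

end
end
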